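/- arXiv:1410.4079 — 7 statements merged into one kernel-verified Lean document; each statement's English description precedes it below -/
import Mathlib

section
/- For every ε ∈ (0, p] there exist C₀ > 0 and s̄₀ > 0, depending only on a, μ, p, ε, such that for all s ≥ s̄₀ and all z ∈ ℝ: | e^{-ps/(p-1)} h( e^{s/(p-1)} z ) | ≤ (C₀ / s^a) ( |z|^p + |z|^{p-ε} ). -/
open Real Filter

noncomputable def hfun (p a μ : ℝ) (z : ℝ) : ℝ :=
  μ * |z| ^ (p - 1) * z / (Real.log (2 + z ^ 2)) ^ a

set_option maxHeartbeats 1000000 in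
/-- Pointwise estimate on the rescaled perturbation term `h`. -/
theorem stmt6 (p : ℝ) (hp : 1 < p) (a : ℝ) (ha : 0 < a) (μ : ℝ)
    (ε : ℝ) (hε0 : 0 < ε) (hεp : ε ≤ p) :
    ∃ C₀ > (0:ℝ), ∃ sb > (0:ℝ), ∀ s : ℝ, sb ≤ s → ∀ z : ℝ,
      |Real.exp (-p * s / (p - 1)) * hfun p a μ (Real.exp (s / (p - 1)) * z)| ≤
        C₀ / s ^ a * (|z| ^ p + |z| ^ (p - ε)) := by
  have hp1 : (0:ℝ) < p - 1 := by linarith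
  have hlog2 : (0:ℝ) < Real.log 2 := Real.log_pos (by norm_num)
  have hlog2a : (0:ℝ) < (Real.log 2) ^ a := Real.rpow_pos_of_pos hlog2 a
  have hpa : (0:ℝ) < (p - 1) ^ a := Real.rpow_pos_of_pos hp1 a
  set δ : ℝ := ε / (2 * (p - 1)) with hδdef
  have hδ : 0 < δ := by positivity
  have htend := tendsto_rpow_mul_exp_neg_mul_atTop_nhds_zero a δ hδ
  have hev : ∀ᶠ s in atTop, s ^ a * Real.exp (-δ * s) ≤ 1 := by
    filter_upwards [htend.eventually (ge_mem_nhds (by norm_num : (0:ℝ) < 1))] with s hs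
    exact hs
  obtain ⟨sb₁, hsb₁⟩ := hev.exists_forall_of_atTop
  set C₀ : ℝ := (|μ| + 1) * ((p - 1) ^ a + ((Real.log 2) ^ a)⁻¹) with hC₀def
  have hC₀pos : 0 < C₀ := by positivity
  have hC1 : |μ| * (p - 1) ^ a ≤ C₀ := by
    rw [hC₀def]
    have h2 : (0:ℝ) < ((Real.log 2) ^ a)⁻¹ := by positivity
    nlinarith [abs_nonneg μ]
  have hC2 : |μ| * ((Real.log 2) ^ a)⁻¹ ≤ C₀ := by
    rw [hC₀def]
    have h2 : (0:ℝ) < ((Real.log 2) ^ a)⁻¹ := by positivity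
    nlinarith [abs_nonneg μ]
  refine ⟨C₀, hC₀pos, max sb₁ 1, lt_of_lt_of_le one_pos (le_max_right _ _), ?_⟩
  intro s hs z
  have hs1 : (1:ℝ) ≤ s := le_trans (le_max_right _ _) hs
  have hs0 : (0:ℝ) < s := lt_of_lt_of_le one_pos hs1
  have hsa : (0:ℝ) < s ^ a := Real.rpow_pos_of_pos hs0 a
  have hsb1s : sb₁ ≤ s := le_trans (le_max_left _ _) hs
  set lam : ℝ := Real.exp (s / (p - 1)) with hlam
  have hlam0 : 0 < lam := Real.exp_pos _
  set L : ℝ := Real.log (2 + (lam * z) ^ 2) with hL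
  have hL2 : Real.log 2 ≤ L := by
    apply Real.log_le_log (by norm_num)
    nlinarith [sq_nonneg (lam * z)]
  have hL0 : 0 < L := lt_of_lt_of_le hlog2 hL2
  have hLa0 : 0 < L ^ a := Real.rpow_pos_of_pos hL0 a
  by_cases hz : z = 0
  · subst hz
    have h0 : hfun p a μ (lam * 0) = 0 := by simp [hfun]
    rw [h0, mul_zero, abs_zero]
    exact mul_nonneg (div_nonneg hC₀pos.le hsa.le)
      (add_nonneg (Real.rpow_nonneg le_rfl _) (Real.rpow_nonneg le_rfl _))
  · set t : ℝ := |z| with ht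
    have ht0 : 0 < t := abs_pos.mpr hz
    have htp : 0 < t ^ p := Real.rpow_pos_of_pos ht0 p
    have htpe : 0 < t ^ (p - ε) := Real.rpow_pos_of_pos ht0 _
    -- rewrite the LHS
    have key : Real.exp (-p * s / (p - 1)) * hfun p a μ (lam * z) =
        μ * t ^ (p - 1) * z / L ^ a := by
      rw [hfun, ← hL]
      have habs : |lam * z| = lam * t := by rw [ht, abs_mul, abs_of_pos hlam0]
      rw [habs, Real.mul_rpow hlam0.le (abs_nonneg z)]
      have hlp : lam ^ (p - 1) = Real.exp (s / (p - 1) * (p - 1)) := by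
        rw [hlam, ← Real.exp_mul]
      have hexp : Real.exp (-p * s / (p - 1)) *
          (Real.exp (s / (p - 1) * (p - 1)) * Real.exp (s / (p - 1))) = 1 := by
        rw [← Real.exp_add, ← Real.exp_add, ← Real.exp_zero]
        congr 1
        simp only [Real.exp_zero]
        field_simp
        ring
      rw [hlp, hlam, ← mul_div_assoc]
      congr 1
      linear_combination (μ * t ^ (p - 1) * z) * hexp
    have keyabs : |Real.exp (-p * s / (p - 1)) * hfun p a μ (lam * z)| =
        |μ| * t ^ p / L ^ a := by
      have hpow : t ^ (p - 1) * t = t ^ p := by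
        nth_rewrite 2 [← Real.rpow_one t]
        rw [← Real.rpow_add ht0]
        ring_nf
      rw [key, abs_div, abs_of_pos hLa0, abs_mul, abs_mul,
        abs_of_nonneg (Real.rpow_nonneg (abs_nonneg z) _), ← ht, mul_assoc, hpow]
    rw [keyabs]
    have hRHS : |z| ^ p = t ^ p := rfl
    rw [hRHS]
    by_cases hcase : Real.exp (-s / (2 * (p - 1))) ≤ t
    · -- Case A : t not too small, use the full log
      have h1 : Real.exp (s / (2 * (p - 1))) ≤ lam * t := by
        calc Real.exp (s / (2 * (p - 1)))
            = lam * Real.exp (-s / (2 * (p - 1))) := by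
              rw [hlam, ← Real.exp_add]; congr 1; field_simp; ring
          _ ≤ lam * t := mul_le_mul_of_nonneg_left hcase hlam0.le
      have h2 : Real.exp (s / (p - 1)) ≤ (lam * t) ^ 2 := by
        have hsq : (Real.exp (s / (2 * (p - 1)))) ^ 2 = Real.exp (s / (p - 1)) := by
          rw [sq, ← Real.exp_add]; congr 1; field_simp; ring
        rw [← hsq]
        exact pow_le_pow_left₀ (Real.exp_pos _).le h1 2
      have h3 : (lam * t) ^ 2 = (lam * z) ^ 2 := by
        rw [ht, mul_pow, mul_pow, sq_abs]
      have hlt : Real.exp (s / (p - 1)) ≤ 2 + (lam * z) ^ 2 := by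
        rw [h3] at h2; linarith
      have hLs : s / (p - 1) ≤ L := by
        calc s / (p - 1) = Real.log (Real.exp (s / (p - 1))) := (Real.log_exp _).symm
          _ ≤ L := Real.log_le_log (Real.exp_pos _) hlt
      have hsp0 : 0 < s / (p - 1) := by positivity
      have hLa : (s / (p - 1)) ^ a ≤ L ^ a := Real.rpow_le_rpow hsp0.le hLs ha.le
      have hdiv : (s / (p - 1)) ^ a = s ^ a / (p - 1) ^ a := Real.div_rpow hs0.le hp1.le a
      have hmain : |μ| * t ^ p / L ^ a ≤ |μ| * (p - 1) ^ a * t ^ p / s ^ a := by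
        rw [div_le_div_iff₀ hLa0 hsa]
        calc |μ| * t ^ p * s ^ a = (|μ| * t ^ p) * ((s / (p - 1)) ^ a * (p - 1) ^ a) := by
              rw [hdiv, div_mul_cancel₀ _ hpa.ne']
          _ ≤ (|μ| * t ^ p) * (L ^ a * (p - 1) ^ a) := by
              apply mul_le_mul_of_nonneg_left _ (by positivity)
              exact mul_le_mul_of_nonneg_right hLa hpa.le
          _ = |μ| * (p - 1) ^ a * t ^ p * L ^ a := by ring
      refine le_trans hmain ?_
      rw [div_mul_eq_mul_div, div_le_div_iff₀ hsa hsa]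
      have h4 : |μ| * (p - 1) ^ a * t ^ p ≤ C₀ * (t ^ p + t ^ (p - ε)) :=
        calc |μ| * (p - 1) ^ a * t ^ p ≤ C₀ * t ^ p :=
              mul_le_mul_of_nonneg_right hC1 htp.le
          _ ≤ C₀ * (t ^ p + t ^ (p - ε)) := by nlinarith
      exact mul_le_mul_of_nonneg_right h4 hsa.le
    · -- Case B : t small
      push_neg at hcase
      have htε : t ^ ε ≤ Real.exp (-δ * s) := by
        calc t ^ ε ≤ (Real.exp (-s / (2 * (p - 1)))) ^ ε :=
              Real.rpow_le_rpow ht0.le hcase.le hε0.le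
          _ = Real.exp (-δ * s) := by
              rw [← Real.exp_mul]; congr 1; rw [hδdef]; field_simp
      have hexps : Real.exp (-δ * s) ≤ 1 / s ^ a := by
        rw [le_div_iff₀ hsa]
        have h5 := hsb₁ s hsb1s
        linarith [mul_comm (s ^ a) (Real.exp (-δ * s))]
      have hsplit : t ^ p = t ^ (p - ε) * t ^ ε := by
        rw [← Real.rpow_add ht0]; ring_nf
      have hmain : |μ| * t ^ p / L ^ a ≤
          |μ| * ((Real.log 2) ^ a)⁻¹ * t ^ (p - ε) / s ^ a := by
        have hLa : (Real.log 2) ^ a ≤ L ^ a := Real.rpow_le_rpow hlog2.le hL2 ha.le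
        have step1 : |μ| * t ^ p / L ^ a ≤ |μ| * t ^ p / (Real.log 2) ^ a :=
          div_le_div_of_nonneg_left (by positivity) hlog2a hLa
        refine le_trans step1 ?_
        rw [hsplit, div_le_div_iff₀ hlog2a hsa]
        calc |μ| * (t ^ (p - ε) * t ^ ε) * s ^ a
            ≤ |μ| * (t ^ (p - ε) * Real.exp (-δ * s)) * s ^ a := by
              apply mul_le_mul_of_nonneg_right _ hsa.le
              apply mul_le_mul_of_nonneg_left _ (abs_nonneg μ)
              exact mul_le_mul_of_nonneg_left htε htpe.le
          _ ≤ |μ| * (t ^ (p - ε) * (1 / s ^ a)) * s ^ a := by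
              apply mul_le_mul_of_nonneg_right _ hsa.le
              apply mul_le_mul_of_nonneg_left _ (abs_nonneg μ)
              exact mul_le_mul_of_nonneg_left hexps htpe.le
          _ = |μ| * t ^ (p - ε) := by field_simp
          _ = |μ| * ((Real.log 2) ^ a)⁻¹ * t ^ (p - ε) * (Real.log 2) ^ a := by
              field_simp
      refine le_trans hmain ?_
      rw [div_mul_eq_mul_div, div_le_div_iff₀ hsa hsa]
      have h4 : |μ| * ((Real.log 2) ^ a)⁻¹ * t ^ (p - ε) ≤ C₀ * (t ^ p + t ^ (p - ε)) :=
        calc |μ| * ((Real.log 2) ^ a)⁻¹ * t ^ (p - ε) ≤ C₀ * t ^ (p - ε) :=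
              mul_le_mul_of_nonneg_right hC2 htpe.le
          _ ≤ C₀ * (t ^ p + t ^ (p - ε)) := by nlinarith
      exact mul_le_mul_of_nonneg_right h4 hsa.le
end

section
/- There exist C₀ > 0 and s̄₀ > 0, depending only on a, μ, p, such that for all s ≥ s̄₀ and all z ∈ ℝ: | e^{-(p+1)s/(p-1)} H( e^{s/(p-1)} z ) | ≤ (C₀ / s^a) ( |z|^{p+1} + 1 ). -/
open Real Filter

noncomputable def Hfun (p a μ : ℝ) (z : ℝ) : ℝ :=
  ∫ ξ in (0:ℝ)..z, hfun p a μ ξ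

lemma log_denom_pos (z : ℝ) : 0 < Real.log (2 + z ^ 2) :=
  Real.log_pos (by nlinarith [sq_nonneg z])

lemma denom_pos (a z : ℝ) : 0 < (Real.log (2 + z ^ 2)) ^ a :=
  Real.rpow_pos_of_pos (log_denom_pos z) a

lemma hfun_continuous (p a μ : ℝ) (hp : 1 < p) : Continuous (hfun p a μ) := by
  unfold hfun
  apply Continuous.div
  · exact (continuous_const.mul
      (continuous_abs.rpow_const (fun x => Or.inr (by linarith)))).mul continuous_id
  · refine Continuous.rpow_const ?_ (fun x => Or.inl (ne_of_gt (log_denom_pos x)))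
    exact Continuous.log (continuous_const.add (continuous_pow 2))
      (fun x => by nlinarith [sq_nonneg x])
  · exact fun x => ne_of_gt (denom_pos a x)

lemma abs_rpow_succ (p : ℝ) (hp : 1 < p) (ξ : ℝ) : |ξ| ^ (p - 1) * |ξ| = |ξ| ^ p := by
  rcases eq_or_ne ξ 0 with h | h
  · simp [h, Real.zero_rpow (by linarith : p - 1 ≠ 0), Real.zero_rpow (by linarith : p ≠ 0)]
  · rw [← Real.rpow_add_one (abs_ne_zero.mpr h) (p - 1), sub_add_cancel]

lemma abs_hfun (p a μ : ℝ) (hp : 1 < p) (ξ : ℝ) :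
    |hfun p a μ ξ| = |μ| * |ξ| ^ p / (Real.log (2 + ξ ^ 2)) ^ a := by
  unfold hfun
  rw [abs_div, abs_of_nonneg (le_of_lt (denom_pos a ξ)), abs_mul, abs_mul,
    abs_of_nonneg (Real.rpow_nonneg (abs_nonneg ξ) _), mul_assoc, abs_rpow_succ p hp ξ]

lemma hfun_odd (p a μ : ℝ) (x : ℝ) : hfun p a μ (-x) = -hfun p a μ x := by
  unfold hfun
  rw [abs_neg, neg_sq]
  ring

lemma Hfun_even (p a μ : ℝ) (y : ℝ) : Hfun p a μ (-y) = Hfun p a μ y := by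
  unfold Hfun
  have h1 : (∫ x in (0:ℝ)..y, hfun p a μ (-x)) = ∫ x in (-y)..(0:ℝ), hfun p a μ x := by
    simpa using intervalIntegral.integral_comp_neg (a := (0:ℝ)) (b := y) (hfun p a μ)
  have h2 : (∫ x in (0:ℝ)..y, hfun p a μ (-x)) = -∫ x in (0:ℝ)..y, hfun p a μ x := by
    simp [hfun_odd]
  have h3 : (∫ x in (-y)..(0:ℝ), hfun p a μ x) = -∫ x in (0:ℝ)..(-y), hfun p a μ x :=
    intervalIntegral.integral_symm 0 (-y)
  linarith

/-- basic bound for the integral of `|hfun|`-type over `[T, y]`. -/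
lemma Hfun_piece (p a μ : ℝ) (hp : 1 < p) (ha : 0 < a) (T y : ℝ) (hT : 0 ≤ T) (hTy : T ≤ y) :
    |∫ ξ in T..y, hfun p a μ ξ| ≤
      |μ| / (Real.log (2 + T ^ 2)) ^ a * (y ^ (p + 1) / (p + 1)) := by
  have hcont := hfun_continuous p a μ hp
  have hintf : IntervalIntegrable (fun ξ => |hfun p a μ ξ|) MeasureTheory.volume T y :=
    hcont.abs.intervalIntegrable _ _
  have hcg : Continuous (fun ξ : ℝ => |μ| / (Real.log (2 + T ^ 2)) ^ a * |ξ| ^ p) :=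
    continuous_const.mul (continuous_abs.rpow_const (fun x => Or.inr (by linarith)))
  have hintg : IntervalIntegrable (fun ξ : ℝ => |μ| / (Real.log (2 + T ^ 2)) ^ a * |ξ| ^ p)
      MeasureTheory.volume T y := hcg.intervalIntegrable _ _
  have key : (∫ ξ in T..y, |hfun p a μ ξ|) ≤
      ∫ ξ in T..y, |μ| / (Real.log (2 + T ^ 2)) ^ a * |ξ| ^ p := by
    apply intervalIntegral.integral_mono_on hTy hintf hintg
    intro ξ hξ
    rw [abs_hfun p a μ hp ξ, div_eq_mul_inv, div_eq_mul_inv, mul_assoc, mul_comm (|ξ| ^ p),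
      ← mul_assoc]
    apply mul_le_mul_of_nonneg_right _ (Real.rpow_nonneg (abs_nonneg ξ) p)
    apply mul_le_mul_of_nonneg_left _ (abs_nonneg μ)
    rw [inv_le_inv₀ (denom_pos a ξ) (denom_pos a T)]
    apply Real.rpow_le_rpow (le_of_lt (log_denom_pos T)) _ (le_of_lt ha)
    apply Real.log_le_log (by nlinarith [sq_nonneg T])
    have h1 : 0 ≤ ξ := le_trans hT hξ.1
    nlinarith [hξ.1]
  have hval : (∫ ξ in T..y, |μ| / (Real.log (2 + T ^ 2)) ^ a * |ξ| ^ p) =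
      |μ| / (Real.log (2 + T ^ 2)) ^ a * ((y ^ (p + 1) - T ^ (p + 1)) / (p + 1)) := by
    rw [intervalIntegral.integral_const_mul]
    congr 1
    rw [show (∫ ξ in T..y, |ξ| ^ p) = ∫ ξ in T..y, ξ ^ p from
      intervalIntegral.integral_congr (fun ξ hξ => by
        rw [Set.uIcc_of_le hTy] at hξ
        rw [abs_of_nonneg (le_trans hT hξ.1)])]
    exact integral_rpow (Or.inl (by linarith))
  calc |∫ ξ in T..y, hfun p a μ ξ| ≤ ∫ ξ in T..y, |hfun p a μ ξ| :=
        intervalIntegral.abs_integral_le_integral_abs hTy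
    _ ≤ |μ| / (Real.log (2 + T ^ 2)) ^ a * ((y ^ (p + 1) - T ^ (p + 1)) / (p + 1)) := by
        rw [← hval]; exact key
    _ ≤ |μ| / (Real.log (2 + T ^ 2)) ^ a * (y ^ (p + 1) / (p + 1)) := by
        apply mul_le_mul_of_nonneg_left _ (div_nonneg (abs_nonneg μ)
          (le_of_lt (denom_pos a T)))
        rw [div_le_div_iff_of_pos_right (by linarith : (0:ℝ) < p + 1)]
        nlinarith [Real.rpow_nonneg hT (p + 1)]
    
/-- Pointwise estimate on the rescaled antiderivative `H`. -/
theorem stmt7 (p : ℝ) (hp : 1 < p) (a : ℝ) (ha : 0 < a) (μ : ℝ) :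
    ∃ C₀ > (0:ℝ), ∃ sb > (0:ℝ), ∀ s : ℝ, sb ≤ s → ∀ z : ℝ,
      |Real.exp (-(p + 1) * s / (p - 1)) * Hfun p a μ (Real.exp (s / (p - 1)) * z)| ≤
        C₀ / s ^ a * (|z| ^ (p + 1) + 1) := by
  have hp1 : (0:ℝ) < p - 1 := by linarith
  have hp2 : (0:ℝ) < p + 1 := by linarith
  have hcont := hfun_continuous p a μ hp
  set c := (p + 1) / (2 * (p - 1)) with hc_def
  have hc : 0 < c := by positivity
  set K1 : ℝ := |μ| / Real.log 2 ^ a / (p + 1) with hK1def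
  have hlog2 : (0:ℝ) < Real.log 2 := Real.log_pos one_lt_two
  have hK1 : 0 ≤ K1 := by
    rw [hK1def]; positivity
  set K2 : ℝ := |μ| * (p - 1) ^ a / (p + 1) with hK2def
  have hK2 : 0 ≤ K2 := by
    rw [hK2def]; positivity
  set C₀ := K1 + K2 + 1 with hC0def
  have hC0 : 0 < C₀ := by rw [hC0def]; linarith
  obtain ⟨N, hN⟩ := Filter.eventually_atTop.mp
    ((tendsto_rpow_mul_exp_neg_mul_atTop_nhds_zero a c hc).eventually_lt_const one_pos)
  refine ⟨C₀, hC0, max N 1, lt_of_lt_of_le one_pos (le_max_right N 1), fun s hs z => ?_⟩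
  have hsN := hN s (le_trans (le_max_left N 1) hs)
  have hs1 : 1 ≤ s := le_trans (le_max_right N 1) hs
  have hs0 : 0 < s := by linarith
  have hsa : 0 < s ^ a := Real.rpow_pos_of_pos hs0 a
  have hexp1 : Real.exp (-c * s) ≤ 1 / s ^ a := by
    rw [le_div_iff₀ hsa, mul_comm]
    exact le_of_lt hsN
  set T := Real.exp (s / (2 * (p - 1))) with hTdef
  have hT0 : 0 < T := Real.exp_pos _
  have hT1 : 1 ≤ T := Real.one_le_exp (by positivity)
  set lam := Real.exp (s / (p - 1)) with hlamdef
  have hlam0 : 0 < lam := Real.exp_pos _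
  set y := lam * |z| with hydef
  have hy0 : 0 ≤ y := by positivity
  set E := Real.exp (-(p + 1) * s / (p - 1)) with hEdef
  have hE0 : 0 < E := Real.exp_pos _
  -- rewrite the LHS
  have hHeq : |Hfun p a μ (lam * z)| = |Hfun p a μ y| := by
    rcases abs_choice z with h | h
    · rw [hydef, h]
    · rw [hydef, h, mul_neg, Hfun_even]
  rw [abs_mul, abs_of_pos hE0, hHeq]
  -- scaling identities
  have hET : E * T ^ (p + 1) = Real.exp (-c * s) := by
    rw [hTdef, Real.rpow_def_of_pos (Real.exp_pos _), Real.log_exp, hEdef, ← Real.exp_add]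
    congr 1
    rw [hc_def]
    field_simp
    ring
  have hEy : E * y ^ (p + 1) = |z| ^ (p + 1) := by
    rw [hydef, Real.mul_rpow (le_of_lt hlam0) (abs_nonneg z), hlamdef,
      Real.rpow_def_of_pos (Real.exp_pos _), Real.log_exp, hEdef, ← mul_assoc, ← Real.exp_add,
      show -(p + 1) * s / (p - 1) + s / (p - 1) * (p + 1) = 0 by ring, Real.exp_zero, one_mul]
  have hlogT : s / (p - 1) ≤ Real.log (2 + T ^ 2) := by
    have h2 : Real.log (T ^ 2) = 2 * Real.log T := by
      rw [Real.log_pow]; norm_num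
    have h3 : Real.log T = s / (2 * (p - 1)) := by rw [hTdef, Real.log_exp]
    have h4 : Real.log (T ^ 2) ≤ Real.log (2 + T ^ 2) :=
      Real.log_le_log (by positivity) (by nlinarith)
    rw [h2, h3] at h4
    have h5 : s / (p - 1) = 2 * (s / (2 * (p - 1))) := by
      field_simp
    linarith
  -- basic growth bound
  have bgen : ∀ w : ℝ, 0 ≤ w → |Hfun p a μ w| ≤ K1 * w ^ (p + 1) := by
    intro w hw
    have h := Hfun_piece p a μ hp ha 0 w le_rfl hw
    norm_num at h
    calc |Hfun p a μ w| ≤ |μ| / Real.log 2 ^ a * (w ^ (p + 1) / (p + 1)) := h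
      _ = K1 * w ^ (p + 1) := by rw [hK1def]; ring
  have hzp : 0 ≤ |z| ^ (p + 1) := Real.rpow_nonneg (abs_nonneg z) _
  have hK1C : K1 * (1 / s ^ a) ≤ C₀ / s ^ a := by
    rw [mul_one_div]
    apply (div_le_div_iff_of_pos_right hsa).mpr
    rw [hC0def]; linarith
  have hC0s : 0 ≤ C₀ / s ^ a := by positivity
  rcases le_total y T with hcase | hcase
  · -- small case
    have hyT : y ^ (p + 1) ≤ T ^ (p + 1) := Real.rpow_le_rpow hy0 hcase (by linarith)
    calc E * |Hfun p a μ y| ≤ E * (K1 * T ^ (p + 1)) := by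
          apply mul_le_mul_of_nonneg_left _ hE0.le
          exact le_trans (bgen y hy0) (mul_le_mul_of_nonneg_left hyT hK1)
      _ = K1 * (E * T ^ (p + 1)) := by ring
      _ = K1 * Real.exp (-c * s) := by rw [hET]
      _ ≤ K1 * (1 / s ^ a) := mul_le_mul_of_nonneg_left hexp1 hK1
      _ ≤ C₀ / s ^ a * (|z| ^ (p + 1) + 1) := by
          rw [mul_add, mul_one]
          have := mul_nonneg hC0s hzp
          linarith
  · -- large case
    have hsplit : Hfun p a μ y =
        (∫ ξ in (0:ℝ)..T, hfun p a μ ξ) + ∫ ξ in T..y, hfun p a μ ξ :=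
      (intervalIntegral.integral_add_adjacent_intervals
        (hcont.intervalIntegrable _ _) (hcont.intervalIntegrable _ _)).symm
    have hb2 := Hfun_piece p a μ hp ha T y (by linarith) hcase
    have hcoef : |μ| / Real.log (2 + T ^ 2) ^ a ≤ |μ| * (p - 1) ^ a / s ^ a := by
      have h5 : (s / (p - 1)) ^ a ≤ Real.log (2 + T ^ 2) ^ a :=
        Real.rpow_le_rpow (by positivity) hlogT ha.le
      have h6 : |μ| / Real.log (2 + T ^ 2) ^ a ≤ |μ| / (s / (p - 1)) ^ a :=
        div_le_div_of_nonneg_left (abs_nonneg μ)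
          (Real.rpow_pos_of_pos (by positivity) a) h5
      have h7 : |μ| / (s / (p - 1)) ^ a = |μ| * (p - 1) ^ a / s ^ a := by
        rw [Real.div_rpow (le_of_lt hs0) (le_of_lt hp1)]
        field_simp
      rw [h7] at h6
      exact h6
    have hbd : |Hfun p a μ y| ≤
        K1 * T ^ (p + 1) + |μ| * (p - 1) ^ a / s ^ a * (y ^ (p + 1) / (p + 1)) := by
      calc |Hfun p a μ y| ≤
          |∫ ξ in (0:ℝ)..T, hfun p a μ ξ| + |∫ ξ in T..y, hfun p a μ ξ| := by
            rw [hsplit]; exact abs_add_le _ _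
        _ ≤ K1 * T ^ (p + 1) +
            |μ| / Real.log (2 + T ^ 2) ^ a * (y ^ (p + 1) / (p + 1)) :=
            add_le_add (bgen T hT0.le) hb2
        _ ≤ _ := by
            apply add_le_add_right
            exact mul_le_mul_of_nonneg_right hcoef (by positivity)
    have h9 : |μ| * (p - 1) ^ a / s ^ a / (p + 1) ≤ C₀ / s ^ a := by
      have : |μ| * (p - 1) ^ a / s ^ a / (p + 1) = K2 / s ^ a := by
        rw [hK2def]; ring
      rw [this]
      apply (div_le_div_iff_of_pos_right hsa).mpr
      rw [hC0def]; linarith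
    calc E * |Hfun p a μ y| ≤
          E * (K1 * T ^ (p + 1) + |μ| * (p - 1) ^ a / s ^ a * (y ^ (p + 1) / (p + 1))) :=
          mul_le_mul_of_nonneg_left hbd hE0.le
      _ = K1 * (E * T ^ (p + 1)) +
          |μ| * (p - 1) ^ a / s ^ a / (p + 1) * (E * y ^ (p + 1)) := by ring
      _ = K1 * Real.exp (-c * s) +
          |μ| * (p - 1) ^ a / s ^ a / (p + 1) * |z| ^ (p + 1) := by rw [hET, hEy]
      _ ≤ C₀ / s ^ a * (|z| ^ (p + 1) + 1) := by
          have h8 : K1 * Real.exp (-c * s) ≤ C₀ / s ^ a :=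
            le_trans (mul_le_mul_of_nonneg_left hexp1 hK1) hK1C
          have h10 := mul_le_mul_of_nonneg_right h9 hzp
          rw [mul_add, mul_one]
          linarith
end

section
/- There exist C₀ > 0 and s̄₀ > 0, depending only on a, μ, p, such that for all s ≥ s̄₀ and all z ∈ ℝ: | (p+1) e^{-(p+1)s/(p-1)} H( e^{s/(p-1)} z ) - e^{-ps/(p-1)} h( e^{s/(p-1)} z ) · z | ≤ (C₀ / s^{a+1}) ( |z|^{p+1} + 1 ). -/
open Real Filter

lemma sq_rpow_half (x q : ℝ) : (x ^ 2) ^ (q / 2) = |x| ^ q := by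
  rw [← sq_abs x, ← Real.rpow_natCast |x| 2, ← Real.rpow_mul (abs_nonneg x)]
  congr 1
  push_cast
  ring

noncomputable def Jf (p a μ L ξ : ℝ) : ℝ :=
  μ * (ξ ^ 2) ^ ((p - 1) / 2) * ξ * (Real.log (2 + (L * ξ) ^ 2)) ^ (-a)

noncomputable def Ef (p a μ L ξ : ℝ) : ℝ :=
  μ * (ξ ^ 2) ^ ((p + 1) / 2) *
    (-a * (Real.log (2 + (L * ξ) ^ 2)) ^ (-a - 1) * (2 * L ^ 2 * ξ / (2 + (L * ξ) ^ 2)))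

noncomputable def Gf (p a μ L ξ : ℝ) : ℝ :=
  μ * (ξ ^ 2) ^ ((p + 1) / 2) * (Real.log (2 + (L * ξ) ^ 2)) ^ (-a)

lemma upos (L ξ : ℝ) : (0:ℝ) < 2 + (L * ξ) ^ 2 := by positivity

lemma logu_pos (L ξ : ℝ) : 0 < Real.log (2 + (L * ξ) ^ 2) :=
  Real.log_pos (by nlinarith [sq_nonneg (L * ξ)])

lemma hasDerivAt_Gf {p : ℝ} (hp : 1 < p) (a μ L ξ : ℝ) :
    HasDerivAt (Gf p a μ L) ((p + 1) * Jf p a μ L ξ + Ef p a μ L ξ) ξ := by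
  have hA : HasDerivAt (fun x : ℝ => (x ^ 2) ^ ((p + 1) / 2))
      ((p + 1) * ((ξ ^ 2) ^ ((p - 1) / 2) * ξ)) ξ := by
    have h1 : HasDerivAt (fun x : ℝ => x ^ 2) (2 * ξ) ξ := by
      simpa using hasDerivAt_pow 2 ξ
    have := h1.rpow_const (p := (p + 1) / 2) (Or.inr (by linarith))
    convert this using 1
    rw [show (p + 1) / 2 - 1 = (p - 1) / 2 by ring]
    ring
  have hu' : HasDerivAt (fun x : ℝ => 2 + (L * x) ^ 2) (2 * L ^ 2 * ξ) ξ := by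
    have h0 : HasDerivAt (fun x : ℝ => L * x) L ξ := by
      simpa using (hasDerivAt_id ξ).const_mul L
    have := (h0.pow 2).const_add 2
    refine this.congr_deriv ?_
    ring
  have hlog : HasDerivAt (fun x : ℝ => Real.log (2 + (L * x) ^ 2))
      (2 * L ^ 2 * ξ / (2 + (L * ξ) ^ 2)) ξ := hu'.log (ne_of_gt (upos L ξ))
  have hB : HasDerivAt (fun x : ℝ => (Real.log (2 + (L * x) ^ 2)) ^ (-a))
      ((-a) * (Real.log (2 + (L * ξ) ^ 2)) ^ (-a - 1) * (2 * L ^ 2 * ξ / (2 + (L * ξ) ^ 2))) ξ := by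
    have := hlog.rpow_const (p := -a) (Or.inl (ne_of_gt (logu_pos L ξ)))
    convert this using 1
    ring
  have := (hA.mul hB).const_mul μ
  unfold Gf Jf Ef
  refine HasDerivAt.congr_deriv (HasDerivAt.congr_of_eventuallyEq this (Filter.Eventually.of_forall fun y => ?_)) ?_
  · simp only [Pi.mul_apply]; ring
  · ring

lemma Gf_zero {p : ℝ} (hp : 1 < p) (a μ L : ℝ) : Gf p a μ L 0 = 0 := by
  simp [Gf, Real.zero_rpow (by positivity : (p + 1) / 2 ≠ 0)]

lemma continuous_Jf {p : ℝ} (hp : 1 < p) (a μ L : ℝ) : Continuous (Jf p a μ L) := by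
  unfold Jf
  have h1 : Continuous fun ξ : ℝ => (ξ ^ 2) ^ ((p - 1) / 2) :=
    (Real.continuous_rpow_const (by linarith)).comp (continuous_pow 2)
  have h2 : Continuous fun ξ : ℝ => (Real.log (2 + (L * ξ) ^ 2)) ^ (-a) := by
    apply continuous_iff_continuousAt.mpr
    intro ξ
    have hlog : ContinuousAt (fun ξ : ℝ => Real.log (2 + (L * ξ) ^ 2)) ξ :=
      ContinuousAt.log (by fun_prop) (ne_of_gt (upos L ξ))
    exact hlog.rpow_const (Or.inl (ne_of_gt (logu_pos L ξ)))
  fun_prop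

lemma continuous_Ef {p : ℝ} (hp : 1 < p) (a μ L : ℝ) : Continuous (Ef p a μ L) := by
  unfold Ef
  have h1 : Continuous fun ξ : ℝ => (ξ ^ 2) ^ ((p + 1) / 2) :=
    (Real.continuous_rpow_const (by linarith)).comp (continuous_pow 2)
  have h2 : Continuous fun ξ : ℝ => (Real.log (2 + (L * ξ) ^ 2)) ^ (-a - 1) := by
    apply continuous_iff_continuousAt.mpr
    intro ξ
    have hlog : ContinuousAt (fun ξ : ℝ => Real.log (2 + (L * ξ) ^ 2)) ξ :=
      ContinuousAt.log (by fun_prop) (ne_of_gt (upos L ξ))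
    exact hlog.rpow_const (Or.inl (ne_of_gt (logu_pos L ξ)))
  have h3 : Continuous fun ξ : ℝ => 2 * L ^ 2 * ξ / (2 + (L * ξ) ^ 2) := by
    apply Continuous.div (by fun_prop) (by fun_prop)
    exact fun ξ => ne_of_gt (upos L ξ)
  fun_prop

lemma aux_ineq1 {c1 c2 S zp : ℝ} (h1 : 0 ≤ c1) (h2 : 0 ≤ c2) (hS : 0 < S) (hzp : 0 ≤ zp) :
    zp * (c1 / S * 1) ≤ (c1 + c2) / S * (zp + 1) := by
  have e1 := div_nonneg h1 hS.le
  have e2 := div_nonneg h2 hS.le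
  have key : (c1 + c2) / S * (zp + 1) - zp * (c1 / S * 1) = c1 / S + c2 / S * zp + c2 / S := by
    field_simp
    ring
  nlinarith [mul_nonneg e1 hzp, mul_nonneg e2 hzp, key]

lemma aux_ineq2 {c1 c2 S zp : ℝ} (h1 : 0 ≤ c1) (h2 : 0 ≤ c2) (hS : 0 < S) (hzp : 0 ≤ zp) :
    1 / S * c2 ≤ (c1 + c2) / S * (zp + 1) := by
  have e1 := div_nonneg h1 hS.le
  have e2 := div_nonneg h2 hS.le
  have key : (c1 + c2) / S * (zp + 1) - 1 / S * c2 = c1 / S * zp + c1 / S + c2 / S * zp := by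
    field_simp
    ring
  nlinarith [mul_nonneg e1 hzp, mul_nonneg e2 hzp, key]

set_option maxHeartbeats 1000000 in
/-- Improved estimate on `(p+1)e^{-(p+1)s/(p-1)}H - e^{-ps/(p-1)}h·z`. -/
theorem stmt8 (p : ℝ) (hp : 1 < p) (a : ℝ) (ha : 0 < a) (μ : ℝ) :
    ∃ C₀ > (0:ℝ), ∃ sb > (0:ℝ), ∀ s : ℝ, sb ≤ s → ∀ z : ℝ,
      |(p + 1) * Real.exp (-(p + 1) * s / (p - 1)) * Hfun p a μ (Real.exp (s / (p - 1)) * z)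
          - Real.exp (-p * s / (p - 1)) * hfun p a μ (Real.exp (s / (p - 1)) * z) * z| ≤
        C₀ / s ^ (a + 1) * (|z| ^ (p + 1) + 1) := by
  have hc0 : (0:ℝ) < p - 1 := by linarith
  obtain ⟨N, hN⟩ : ∃ N : ℝ, ∀ s : ℝ, N ≤ s →
      s ^ (a + 1) * Real.exp (-(p / (2 * (p - 1))) * s) ≤ 1 := by
    have ht := tendsto_rpow_mul_exp_neg_mul_atTop_nhds_zero (a + 1) (p / (2 * (p - 1)))
      (by positivity)
    have h2 := ht.eventually_le_const (by norm_num : (0:ℝ) < 1)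
    rw [eventually_atTop] at h2
    exact h2
  set K := 2 * a * |μ| * ((p - 1) ^ (a + 1) + (Real.log 2) ^ (-(a + 1))) with hKdef
  have hlog2 : (0:ℝ) < Real.log 2 := Real.log_pos (by norm_num)
  have hpow1 : (0:ℝ) ≤ (p - 1) ^ (a + 1) := Real.rpow_nonneg hc0.le _
  have hpow2 : (0:ℝ) ≤ (Real.log 2) ^ (-(a + 1)) := Real.rpow_nonneg hlog2.le _
  have hK0 : 0 ≤ K := by positivity
  refine ⟨2 * K + 1, by positivity, max N 1, lt_of_lt_of_le one_pos (le_max_right N 1), ?_⟩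
  intro s hs z
  have hs1 : (1:ℝ) ≤ s := le_trans (le_max_right N 1) hs
  have hs0 : (0:ℝ) < s := lt_of_lt_of_le one_pos hs1
  have hsN : N ≤ s := le_trans (le_max_left N 1) hs
  have hsa : (0:ℝ) < s ^ (a + 1) := Real.rpow_pos_of_pos hs0 _
  set L := Real.exp (s / (p - 1)) with hLdef
  have hL0 : 0 < L := Real.exp_pos _
  -- (1) integrand identity
  have hI : ∀ ξ : ℝ, Real.exp (-p * s / (p - 1)) * hfun p a μ (L * ξ) = Jf p a μ L ξ := by
    intro ξ
    have hlog := logu_pos L ξ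
    have hexp : Real.exp (-p * s / (p - 1)) *
        (Real.exp (s / (p - 1) * (p - 1)) * Real.exp (s / (p - 1))) = 1 := by
      rw [← Real.exp_add, ← Real.exp_add, ← Real.exp_zero]
      congr 1
      simp only [Real.exp_zero]
      field_simp
      ring
    unfold hfun Jf
    rw [abs_mul, abs_of_pos hL0, Real.mul_rpow hL0.le (abs_nonneg ξ),
      ← sq_rpow_half ξ (p - 1), Real.rpow_neg hlog.le, hLdef, ← Real.exp_mul]
    linear_combination (μ * (ξ ^ 2) ^ ((p - 1) / 2) * ξ /
      (Real.log (2 + (Real.exp (s / (p - 1)) * ξ) ^ 2)) ^ a) * hexp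
  -- (2) H scaling
  have hH : Hfun p a μ (L * z) = L * ∫ ξ in (0:ℝ)..z, hfun p a μ (L * ξ) := by
    have h := intervalIntegral.smul_integral_comp_mul_left (f := hfun p a μ) (a := 0) (b := z) L
    simp only [mul_zero] at h
    unfold Hfun
    rw [← h, smul_eq_mul]
  -- (3) integrability
  have hJint : IntervalIntegrable (Jf p a μ L) MeasureTheory.volume 0 z :=
    (continuous_Jf hp a μ L).intervalIntegrable 0 z
  have hEint : IntervalIntegrable (Ef p a μ L) MeasureTheory.volume 0 z :=
    (continuous_Ef hp a μ L).intervalIntegrable 0 z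
  -- (4) FTC
  have hFTC : ∫ ξ in (0:ℝ)..z, ((p + 1) * Jf p a μ L ξ + Ef p a μ L ξ) =
      Gf p a μ L z - Gf p a μ L 0 :=
    intervalIntegral.integral_eq_sub_of_hasDerivAt (fun ξ _ => hasDerivAt_Gf hp a μ L ξ)
      ((continuous_const.mul (continuous_Jf hp a μ L)).add (continuous_Ef hp a μ L)
        |>.intervalIntegrable 0 z)
  -- (5) G z = J z * z
  have hGz : Gf p a μ L z = Jf p a μ L z * z := by
    unfold Gf Jf
    rw [show (p + 1) / 2 = (p - 1) / 2 + 1 by ring,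
      Real.rpow_add' (sq_nonneg z) (ne_of_gt (by linarith : (0:ℝ) < (p - 1) / 2 + 1)),
      Real.rpow_one]
    ring
  -- (6) the difference equals -∫E
  have key : (p + 1) * Real.exp (-(p + 1) * s / (p - 1)) * Hfun p a μ (L * z)
      - Real.exp (-p * s / (p - 1)) * hfun p a μ (L * z) * z
      = -(∫ ξ in (0:ℝ)..z, Ef p a μ L ξ) := by
    rw [hH]
    have hL1 : Real.exp (-(p + 1) * s / (p - 1)) * L = Real.exp (-p * s / (p - 1)) := by
      rw [hLdef, ← Real.exp_add]
      congr 1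
      field_simp
      ring
    have e1 : (p + 1) * Real.exp (-(p + 1) * s / (p - 1)) *
        (L * ∫ ξ in (0:ℝ)..z, hfun p a μ (L * ξ)) = (p + 1) * ∫ ξ in (0:ℝ)..z, Jf p a μ L ξ := by
      have hJeq : (∫ ξ in (0:ℝ)..z, Jf p a μ L ξ)
          = Real.exp (-p * s / (p - 1)) * ∫ ξ in (0:ℝ)..z, hfun p a μ (L * ξ) := by
        rw [← intervalIntegral.integral_const_mul]
        exact intervalIntegral.integral_congr fun ξ _ => (hI ξ).symm
      rw [hJeq, ← hL1]
      ring
    have e2 : Real.exp (-p * s / (p - 1)) * hfun p a μ (L * z) * z = Jf p a μ L z * z := by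
      rw [hI z]
    have e3 : (∫ ξ in (0:ℝ)..z, ((p + 1) * Jf p a μ L ξ + Ef p a μ L ξ))
        = (p + 1) * (∫ ξ in (0:ℝ)..z, Jf p a μ L ξ) + ∫ ξ in (0:ℝ)..z, Ef p a μ L ξ := by
      rw [intervalIntegral.integral_add (hJint.const_mul _) hEint,
        intervalIntegral.integral_const_mul]
    rw [Gf_zero hp a μ L, sub_zero] at hFTC
    rw [e1, e2, ← hGz, ← hFTC, e3]
    ring
  rw [key]
  -- (7) bound the integral
  have hptw : ∀ ξ ∈ Set.uIoc (0:ℝ) z, ‖Ef p a μ L ξ‖ ≤ K / s ^ (a + 1) * (|z| ^ p + 1) := by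
    intro ξ hmem
    have hξz : |ξ| ≤ |z| := by
      rcases Set.mem_uIoc.mp hmem with h | h
      · rw [abs_of_pos h.1]; exact le_trans h.2 (le_abs_self z)
      · rw [abs_of_nonpos h.2]; exact le_trans (by linarith [h.1]) (neg_le_abs z)
    have hu := upos L ξ
    have hlogu := logu_pos L ξ
    have hW : (0:ℝ) < (Real.log (2 + (L * ξ) ^ 2)) ^ (-a - 1) := Real.rpow_pos_of_pos hlogu _
    have hEeq : |Ef p a μ L ξ| = 2 * a * |μ| *
        (|ξ| ^ p * ((Real.log (2 + (L * ξ) ^ 2)) ^ (-a - 1) *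
          ((L * ξ) ^ 2 / (2 + (L * ξ) ^ 2)))) := by
      unfold Ef
      rw [abs_mul, abs_mul]
      rw [abs_of_nonneg (Real.rpow_nonneg (sq_nonneg ξ) _)]
      rw [abs_mul, abs_mul, abs_neg, abs_of_pos ha, abs_of_pos hW]
      rw [abs_div, abs_of_pos hu, abs_mul, abs_mul, abs_two, abs_of_pos (pow_pos hL0 2)]
      rw [sq_rpow_half ξ (p + 1),
        Real.rpow_add' (abs_nonneg ξ) (by linarith : p + 1 ≠ 0), Real.rpow_one]
      rw [show (L * ξ) ^ 2 = L ^ 2 * (|ξ| * |ξ|) by rw [mul_pow, ← sq_abs ξ]; ring]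
      field_simp
    have hfrac : (L * ξ) ^ 2 / (2 + (L * ξ) ^ 2) ≤ 1 := by
      rw [div_le_one hu]; nlinarith [sq_nonneg (L * ξ)]
    have hfrac0 : 0 ≤ (L * ξ) ^ 2 / (2 + (L * ξ) ^ 2) := by positivity
    have hξp0 : (0:ℝ) ≤ |ξ| ^ p := Real.rpow_nonneg (abs_nonneg ξ) p
    have hz0 : (0:ℝ) ≤ |z| ^ p := Real.rpow_nonneg (abs_nonneg z) p
    have hcore : |ξ| ^ p * ((Real.log (2 + (L * ξ) ^ 2)) ^ (-a - 1) *
          ((L * ξ) ^ 2 / (2 + (L * ξ) ^ 2)))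
        ≤ ((p - 1) ^ (a + 1) + (Real.log 2) ^ (-(a + 1))) / s ^ (a + 1) * (|z| ^ p + 1) := by
      by_cases hcase : L ≤ (L * ξ) ^ 2
      · have h1 : s / (p - 1) ≤ Real.log (2 + (L * ξ) ^ 2) := by
          calc s / (p - 1) = Real.log L := by rw [hLdef, Real.log_exp]
            _ ≤ Real.log (2 + (L * ξ) ^ 2) := Real.log_le_log hL0 (by linarith)
        have h2 : (Real.log (2 + (L * ξ) ^ 2)) ^ (-a - 1) ≤ (s / (p - 1)) ^ (-(a + 1)) := by
          rw [show -a - 1 = -(a + 1) by ring]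
          exact Real.rpow_le_rpow_of_nonpos (by positivity) h1 (by linarith)
        have h3 : (s / (p - 1)) ^ (-(a + 1)) = (p - 1) ^ (a + 1) / s ^ (a + 1) := by
          rw [Real.rpow_neg (by positivity), Real.div_rpow hs0.le hc0.le, inv_div]
        have h4 : |ξ| ^ p ≤ |z| ^ p := Real.rpow_le_rpow (abs_nonneg ξ) hξz (by linarith)
        calc |ξ| ^ p * ((Real.log (2 + (L * ξ) ^ 2)) ^ (-a - 1) *
              ((L * ξ) ^ 2 / (2 + (L * ξ) ^ 2)))
            ≤ |z| ^ p * ((p - 1) ^ (a + 1) / s ^ (a + 1) * 1) := by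
              apply mul_le_mul h4 _ (mul_nonneg hW.le hfrac0) hz0
              exact mul_le_mul (h3 ▸ h2) hfrac hfrac0 (by positivity)
          _ ≤ ((p - 1) ^ (a + 1) + (Real.log 2) ^ (-(a + 1))) / s ^ (a + 1) * (|z| ^ p + 1) :=
              aux_ineq1 hpow1 hpow2 hsa hz0
      · push_neg at hcase
        have hξ2 : ξ ^ 2 ≤ Real.exp (-(s / (p - 1))) := by
          have h' : (ξ ^ 2 * L) * L ≤ L := by nlinarith [sq_nonneg (L * ξ)]
          have h'' : ξ ^ 2 * L ≤ 1 := by nlinarith [sq_nonneg ξ]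
          rw [Real.exp_neg, ← hLdef, ← one_div, le_div_iff₀ hL0]
          exact h''
        have hξp : |ξ| ^ p ≤ Real.exp (-(p / (2 * (p - 1))) * s) := by
          rw [← sq_rpow_half ξ p]
          calc (ξ ^ 2) ^ (p / 2) ≤ (Real.exp (-(s / (p - 1)))) ^ (p / 2) :=
              Real.rpow_le_rpow (sq_nonneg ξ) hξ2 (by positivity)
            _ = Real.exp (-(p / (2 * (p - 1))) * s) := by
              rw [← Real.exp_mul]
              congr 1
              field_simp
        have hexp1 : Real.exp (-(p / (2 * (p - 1))) * s) ≤ 1 / s ^ (a + 1) := by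
          rw [le_div_iff₀ hsa]
          have := hN s hsN
          linarith [mul_comm (s ^ (a + 1)) (Real.exp (-(p / (2 * (p - 1))) * s))]
        have h2 : (Real.log (2 + (L * ξ) ^ 2)) ^ (-a - 1) ≤ (Real.log 2) ^ (-(a + 1)) := by
          rw [show -a - 1 = -(a + 1) by ring]
          exact Real.rpow_le_rpow_of_nonpos hlog2
            (Real.log_le_log two_pos (by nlinarith [sq_nonneg (L * ξ)])) (by linarith)
        calc |ξ| ^ p * ((Real.log (2 + (L * ξ) ^ 2)) ^ (-a - 1) *
              ((L * ξ) ^ 2 / (2 + (L * ξ) ^ 2)))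
            ≤ Real.exp (-(p / (2 * (p - 1))) * s) * ((Real.log 2) ^ (-(a + 1)) * 1) := by
              apply mul_le_mul hξp _ (mul_nonneg hW.le hfrac0) (Real.exp_pos _).le
              exact mul_le_mul h2 hfrac hfrac0 hpow2
          _ ≤ 1 / s ^ (a + 1) * (Real.log 2) ^ (-(a + 1)) := by
              rw [mul_one]
              exact mul_le_mul_of_nonneg_right hexp1 hpow2
          _ ≤ ((p - 1) ^ (a + 1) + (Real.log 2) ^ (-(a + 1))) / s ^ (a + 1) * (|z| ^ p + 1) :=
              aux_ineq2 hpow1 hpow2 hsa hz0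
    rw [Real.norm_eq_abs, hEeq]
    calc 2 * a * |μ| * (|ξ| ^ p * ((Real.log (2 + (L * ξ) ^ 2)) ^ (-a - 1) *
          ((L * ξ) ^ 2 / (2 + (L * ξ) ^ 2))))
        ≤ 2 * a * |μ| * (((p - 1) ^ (a + 1) + (Real.log 2) ^ (-(a + 1))) / s ^ (a + 1) *
            (|z| ^ p + 1)) := by
          apply mul_le_mul_of_nonneg_left hcore (by positivity)
      _ = K / s ^ (a + 1) * (|z| ^ p + 1) := by rw [hKdef]; ring
  have hbnd := intervalIntegral.norm_integral_le_of_norm_le_const hptw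
  rw [Real.norm_eq_abs] at hbnd
  have hfin : K / s ^ (a + 1) * (|z| ^ p + 1) * |z - 0| ≤
      (2 * K + 1) / s ^ (a + 1) * (|z| ^ (p + 1) + 1) := by
    rw [sub_zero]
    have hzp1 : |z| ^ p * |z| = |z| ^ (p + 1) := by
      rw [Real.rpow_add' (abs_nonneg z) (by linarith : p + 1 ≠ 0), Real.rpow_one]
    have hzp10 : (0:ℝ) ≤ |z| ^ (p + 1) := Real.rpow_nonneg (abs_nonneg z) _
    have hzle : |z| ≤ |z| ^ (p + 1) + 1 := by
      by_cases hz1 : |z| ≤ 1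
      · linarith
      · push_neg at hz1
        have : |z| ^ (1:ℝ) ≤ |z| ^ (p + 1) :=
          Real.rpow_le_rpow_of_exponent_le hz1.le (by linarith)
        rw [Real.rpow_one] at this
        linarith
    have hexpand : (|z| ^ p + 1) * |z| = |z| ^ (p + 1) + |z| := by
      rw [add_mul, one_mul, hzp1]
    rw [mul_assoc, hexpand]
    calc K / s ^ (a + 1) * (|z| ^ (p + 1) + |z|)
        ≤ K / s ^ (a + 1) * (2 * (|z| ^ (p + 1) + 1)) := by
          apply mul_le_mul_of_nonneg_left (by linarith) (by positivity)
      _ ≤ (2 * K + 1) / s ^ (a + 1) * (|z| ^ (p + 1) + 1) := by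
          rw [div_mul_eq_mul_div, div_mul_eq_mul_div, div_le_div_iff₀ hsa hsa]
          nlinarith [hsa, hzp10, mul_nonneg hzp10 hsa.le]
  calc |(-(∫ ξ in (0:ℝ)..z, Ef p a μ L ξ))| = |∫ ξ in (0:ℝ)..z, Ef p a μ L ξ| := abs_neg _
    _ ≤ K / s ^ (a + 1) * (|z| ^ p + 1) * |z - 0| := hbnd
    _ ≤ (2 * K + 1) / s ^ (a + 1) * (|z| ^ (p + 1) + 1) := hfin
end

section
/- For all real q > 0, b > 0 and p > 1 there exist C > 0 and s̄₀ > 0, depending only on b, q (and p), such that for all s ≥ s̄₀ and all z ∈ ℝ: |z|^q / ( log(2 + e^{2s/(p-1)} z²) )^b ≤ (C / s^b) ( |z|^q + 1 ). -/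
open Real

/-- Basic logarithmic estimate. -/
theorem stmt9 (q b p : ℝ) (hq : 0 < q) (hb : 0 < b) (hp : 1 < p) :
    ∃ C > (0:ℝ), ∃ sb > (0:ℝ), ∀ s : ℝ, sb ≤ s → ∀ z : ℝ,
      |z| ^ q / (Real.log (2 + Real.exp (2 * s / (p - 1)) * z ^ 2)) ^ b ≤
        C / s ^ b * (|z| ^ q + 1) := by
  have hp1 : (0:ℝ) < p - 1 := by linarith
  set α : ℝ := 2 / (p - 1) with hα
  have hα0 : 0 < α := by positivity
  set m : ℝ := q * α / 4 with hm
  have hm0 : 0 < m := by positivity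
  have hlog2 : 0 < Real.log 2 := Real.log_pos (by norm_num)
  refine ⟨(2/α)^b + ((Real.log 2)⁻¹)^b, by positivity,
    max 1 ((2*b/m)^2), by positivity, ?_⟩
  intro s hs z
  have hs1 : (1:ℝ) ≤ s := le_trans (le_max_left _ _) hs
  have hs0 : 0 < s := by linarith
  have hsb2 : (2*b/m)^2 ≤ s := le_trans (le_max_right _ _) hs
  have hzq : (0:ℝ) ≤ |z| ^ q := Real.rpow_nonneg (abs_nonneg z) q
  have hden0 : (0:ℝ) < 2 + Real.exp (2 * s / (p - 1)) * z ^ 2 := by positivity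
  have hL2 : Real.log 2 ≤ Real.log (2 + Real.exp (2 * s / (p - 1)) * z ^ 2) := by
    apply Real.log_le_log (by norm_num)
    nlinarith [Real.exp_pos (2*s/(p-1)), sq_nonneg z]
  have hL0 : 0 < Real.log (2 + Real.exp (2 * s / (p - 1)) * z ^ 2) :=
    lt_of_lt_of_le hlog2 hL2
  have hsb0 : (0:ℝ) < s^b := Real.rpow_pos_of_pos hs0 b
  have hc0 : (0:ℝ) < ((Real.log 2)⁻¹)^b := Real.rpow_pos_of_pos (by positivity) b
  have h2α : (0:ℝ) < (2/α)^b := Real.rpow_pos_of_pos (by positivity) b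
  have heq : 2 * s / (p - 1) = α * s := by field_simp [hα]; rw [hα]; field_simp [hp1.ne']
  by_cases hz : Real.exp (-(α*s/4)) ≤ |z|
  · -- big z case: log ≥ α s / 2
    have hexp : Real.exp (α*s/2) ≤ 2 + Real.exp (2 * s / (p - 1)) * z ^ 2 := by
      rw [heq]
      have h1 : Real.exp (-(α*s/4)) * Real.exp (-(α*s/4)) ≤ z ^ 2 := by
        calc Real.exp (-(α*s/4)) * Real.exp (-(α*s/4)) ≤ |z| * |z| :=
              mul_le_mul hz hz (Real.exp_pos _).le (abs_nonneg z)
          _ = z ^ 2 := by rw [← sq_abs]; ring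
      have h2 : Real.exp (α*s) * (Real.exp (-(α*s/4)) * Real.exp (-(α*s/4)))
          ≤ Real.exp (α*s) * z ^ 2 :=
        mul_le_mul_of_nonneg_left h1 (Real.exp_pos _).le
      have h3 : Real.exp (α*s) * (Real.exp (-(α*s/4)) * Real.exp (-(α*s/4)))
          = Real.exp (α*s/2) := by
        rw [← Real.exp_add, ← Real.exp_add]; ring_nf
      nlinarith
    have hL : α*s/2 ≤ Real.log (2 + Real.exp (2 * s / (p - 1)) * z ^ 2) := by
      calc α*s/2 = Real.log (Real.exp (α*s/2)) := (Real.log_exp _).symm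
        _ ≤ _ := Real.log_le_log (Real.exp_pos _) hexp
    have hαs0 : 0 < α*s/2 := by positivity
    have hpow : (α*s/2)^b ≤ (Real.log (2 + Real.exp (2 * s / (p - 1)) * z ^ 2))^b :=
      Real.rpow_le_rpow hαs0.le hL hb.le
    have hpow0 : (0:ℝ) < (α*s/2)^b := Real.rpow_pos_of_pos hαs0 b
    have step1 : |z| ^ q / (Real.log (2 + Real.exp (2 * s / (p - 1)) * z ^ 2)) ^ b
        ≤ |z| ^ q / (α*s/2)^b :=
      div_le_div_of_nonneg_left hzq hpow0 hpow
    have hsplit : (α*s/2)^b = (α/2)^b * s^b := by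
      rw [← Real.mul_rpow (by positivity) hs0.le]; ring_nf
    have hinv2 : ((α/2)^b)⁻¹ = (2/α)^b := by
      rw [show (2:ℝ)/α = (α/2)⁻¹ by rw [inv_div], Real.inv_rpow (by positivity)]
    have step2 : |z| ^ q / (α*s/2)^b = (2/α)^b / s^b * |z|^q := by
      rw [hsplit, ← hinv2, div_eq_mul_inv, div_eq_mul_inv, mul_inv]; ring
    calc |z| ^ q / (Real.log (2 + Real.exp (2 * s / (p - 1)) * z ^ 2)) ^ b
        ≤ (2/α)^b / s^b * |z|^q := by rw [← step2]; exact step1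
      _ ≤ ((2/α)^b + ((Real.log 2)⁻¹)^b) / s^b * (|z|^q + 1) := by
          have h1 : (2/α)^b / s^b ≤ ((2/α)^b + ((Real.log 2)⁻¹)^b) / s^b := by
            gcongr
            linarith
          have h2 : |z|^q ≤ |z|^q + 1 := by linarith
          have := mul_le_mul h1 h2 hzq (by positivity)
          linarith
  · -- small z case
    push_neg at hz
    have hzq' : |z| ^ q ≤ Real.exp (-(m*s)) := by
      calc |z| ^ q ≤ (Real.exp (-(α*s/4))) ^ q :=
            Real.rpow_le_rpow (abs_nonneg z) hz.le hq.le
        _ = Real.exp (-(m*s)) := by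
            rw [← Real.exp_log (Real.rpow_pos_of_pos (Real.exp_pos _) q),
              Real.log_rpow (Real.exp_pos _), Real.log_exp]
            congr 1
            rw [hm]; ring
    have hsqrt : 2*b/m ≤ Real.sqrt s := by
      have := Real.sqrt_le_sqrt hsb2
      rwa [Real.sqrt_sq (by positivity)] at this
    have hlogs : Real.log s ≤ 2 * Real.sqrt s := by
      have h1 : Real.log (Real.sqrt s) ≤ Real.sqrt s - 1 :=
        Real.log_le_sub_one_of_pos (Real.sqrt_pos.mpr hs0)
      have h2 : Real.log (Real.sqrt s) = Real.log s / 2 := Real.log_sqrt hs0.le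
      linarith
    have hsb_exp : s^b ≤ Real.exp (m*s) := by
      rw [Real.rpow_def_of_pos hs0]
      apply Real.exp_le_exp.mpr
      have hss : Real.sqrt s * Real.sqrt s = s := Real.mul_self_sqrt hs0.le
      have hsq0 : 0 < Real.sqrt s := Real.sqrt_pos.mpr hs0
      have h2b : 2*b ≤ m*Real.sqrt s := by
        rw [div_le_iff₀ hm0] at hsqrt; linarith
      nlinarith [Real.log_nonneg hs1, mul_nonneg (sub_nonneg.mpr h2b) hsq0.le]
    have hms : Real.exp (-(m*s)) ≤ 1 / s^b := by
      rw [Real.exp_neg, inv_eq_one_div]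
      exact one_div_le_one_div_of_le hsb0 hsb_exp
    have hLb : (Real.log 2)^b ≤ (Real.log (2 + Real.exp (2 * s / (p - 1)) * z ^ 2))^b :=
      Real.rpow_le_rpow hlog2.le hL2 hb.le
    have hL2b : (0:ℝ) < (Real.log 2)^b := Real.rpow_pos_of_pos hlog2 b
    have hinvlog : ((Real.log 2)⁻¹)^b = 1/(Real.log 2)^b := by
      rw [Real.inv_rpow hlog2.le, inv_eq_one_div]
    calc |z| ^ q / (Real.log (2 + Real.exp (2 * s / (p - 1)) * z ^ 2)) ^ b
        ≤ Real.exp (-(m*s)) / (Real.log 2)^b :=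
          div_le_div₀ (Real.exp_pos _).le hzq' hL2b hLb
      _ ≤ (1/s^b) / (Real.log 2)^b :=
          by gcongr
      _ = ((Real.log 2)⁻¹)^b / s^b * 1 := by rw [hinvlog]; field_simp
      _ ≤ ((2/α)^b + ((Real.log 2)⁻¹)^b) / s^b * (|z|^q + 1) := by
          apply mul_le_mul ?_ (by linarith) (by norm_num) (by positivity)
          gcongr
          linarith
end

section
/- Let C > 0, R > 0 and δ ∈ (0,1). Then there exist θ = θ(δ, C, R) > 0 and ε₀ = ε₀(δ, C, R) > 0 such that the following holds: for every ε ∈ (0, ε₀) and every continuous function 𝓗 : [0, ∞) → [0, ∞) satisfying, for all τ > 0, 𝓗(τ) ≤ ε e^τ + C ∫₀^{max(τ - R, 0)} e^{τ - s} 𝓗(s)² / (1 - e^{-(τ - s - R)})^δ ds, and for every τ ≥ 0 with ε e^τ ≤ θ, one has 𝓗(τ) ≤ 2 ε e^τ. -/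
open Real MeasureTheory intervalIntegral

/-- Auxiliary: integrability and bound for the singular model integral. -/
lemma stmt12_aux (δ T A : ℝ) (hδ0 : 0 < δ) (hδ1 : δ < 1) (hT : 0 < T) (hA : 0 ≤ A) :
    IntervalIntegrable (fun s => A * (Real.exp s * (1 - Real.exp (s - T)) ^ (-δ)))
      MeasureTheory.volume 0 T ∧
    (∫ s in (0:ℝ)..T, A * (Real.exp s * (1 - Real.exp (s - T)) ^ (-δ)))
      ≤ A * Real.exp T / (1 - δ) := by
  have h1δ : (0:ℝ) < 1 - δ := by linarith
  set g : ℝ → ℝ := fun s => -(A * Real.exp T / (1 - δ)) * (1 - Real.exp (s - T)) ^ (1 - δ)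
    with hg
  set g' : ℝ → ℝ := fun s => A * (Real.exp s * (1 - Real.exp (s - T)) ^ (-δ)) with hg'
  have hcont : Continuous g := by
    apply continuous_const.mul
    rw [continuous_iff_continuousAt]
    intro x
    exact (Real.continuousAt_rpow_const _ _ (Or.inr h1δ.le)).comp
      (continuous_const.sub (Real.continuous_exp.comp
        (continuous_id.sub continuous_const))).continuousAt
  have hderiv : ∀ x ∈ Set.Ioo (0:ℝ) T, HasDerivAt g (g' x) x := by
    intro x hx
    have hb : 0 < 1 - Real.exp (x - T) := by
      have : Real.exp (x - T) < 1 := Real.exp_lt_one_iff.mpr (by linarith [hx.2])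
      linarith
    have hbase : HasDerivAt (fun s : ℝ => 1 - Real.exp (s - T)) (-Real.exp (x - T)) x := by
      have h1 : HasDerivAt (fun s : ℝ => Real.exp (s - T)) (Real.exp (x - T)) x := by
        simpa [Function.comp_def] using (Real.hasDerivAt_exp (x - T)).comp x ((hasDerivAt_id x).sub_const T)
      simpa using h1.const_sub 1
    have h2 := hbase.rpow_const (p := 1 - δ) (Or.inl hb.ne')
    have h3 := h2.const_mul (-(A * Real.exp T / (1 - δ)))
    refine h3.congr_deriv (Eq.symm ?_)
    have he : Real.exp T * Real.exp (x - T) = Real.exp x := by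
      rw [← Real.exp_add]; ring_nf
    have hpow : (1 - Real.exp (x - T)) ^ (1 - δ - 1) = (1 - Real.exp (x - T)) ^ (-δ) := by
      norm_num
    show A * (Real.exp x * (1 - Real.exp (x - T)) ^ (-δ)) = _
    rw [hpow, ← he]
    field_simp
  have hpos : ∀ x ∈ Set.Ioo (0:ℝ) T, 0 ≤ g' x := by
    intro x hx
    have hb : (0:ℝ) ≤ 1 - Real.exp (x - T) := by
      have : Real.exp (x - T) ≤ 1 := Real.exp_le_one_iff.mpr (by linarith [hx.2])
      linarith
    exact mul_nonneg hA (mul_nonneg (Real.exp_pos x).le (Real.rpow_nonneg hb _))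
  have hint : IntervalIntegrable g' MeasureTheory.volume 0 T := by
    rw [intervalIntegrable_iff_integrableOn_Ioc_of_le hT.le]
    exact intervalIntegral.integrableOn_deriv_of_nonneg hcont.continuousOn hderiv hpos
  refine ⟨hint, ?_⟩
  have hval : (∫ s in (0:ℝ)..T, g' s) = g T - g 0 :=
    intervalIntegral.integral_eq_sub_of_hasDeriv_right_of_le hT.le hcont.continuousOn
      (fun x hx => (hderiv x hx).hasDerivWithinAt) hint
  have hgT : (1 - Real.exp (T - T)) ^ (1 - δ) = 0 := by
    rw [sub_self, Real.exp_zero, sub_self]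
    exact Real.zero_rpow (by linarith : (1:ℝ) - δ ≠ 0)
  have hb0 : (0:ℝ) ≤ 1 - Real.exp (-T) := by
    have : Real.exp (-T) ≤ 1 := Real.exp_le_one_iff.mpr (by linarith)
    linarith
  have hle1 : (1 - Real.exp (-T)) ^ (1 - δ) ≤ 1 :=
    Real.rpow_le_one hb0 (by nlinarith [Real.exp_pos (-T)]) h1δ.le
  have hAeT : (0:ℝ) ≤ A * Real.exp T / (1 - δ) := by positivity
  rw [hval, hg]
  simp only [hgT, mul_zero, zero_sub, neg_mul, neg_neg]
  calc A * Real.exp T / (1 - δ) * (1 - Real.exp (-T)) ^ (1 - δ)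
      ≤ A * Real.exp T / (1 - δ) * 1 := mul_le_mul_of_nonneg_left hle1 hAeT
    _ = A * Real.exp T / (1 - δ) := mul_one _

/-- Gronwall-type lemma of Velázquez. -/
theorem stmt12 (C R δ : ℝ) (hC : 0 < C) (hR : 0 < R) (hδ : δ ∈ Set.Ioo (0:ℝ) 1) :
    ∃ θ > (0:ℝ), ∃ ε₀ > (0:ℝ), ∀ ε : ℝ, 0 < ε → ε < ε₀ →
      ∀ H : ℝ → ℝ, ContinuousOn H (Set.Ici 0) → (∀ τ, 0 ≤ τ → 0 ≤ H τ) →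
        (∀ τ : ℝ, 0 < τ →
          H τ ≤ ε * Real.exp τ +
            C * ∫ s in (0:ℝ)..max (τ - R) 0,
              Real.exp (τ - s) * H s ^ 2 / (1 - Real.exp (-(τ - s - R))) ^ δ) →
        ∀ τ : ℝ, 0 ≤ τ → ε * Real.exp τ ≤ θ → H τ ≤ 2 * ε * Real.exp τ := by
  obtain ⟨hδ0, hδ1⟩ := hδ
  have h1δ : (0:ℝ) < 1 - δ := by linarith
  refine ⟨(1 - δ) * Real.exp R / (4 * C), by positivity, 1, one_pos, ?_⟩
  set θ := (1 - δ) * Real.exp R / (4 * C) with hθdef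
  intro ε hε hε1 H hHc hHnn hHineq
  -- small times: the integral vanishes
  have hsmall : ∀ τ : ℝ, 0 < τ → τ ≤ R → H τ ≤ ε * Real.exp τ := by
    intro τ hτ hτR
    have h := hHineq τ hτ
    rw [max_eq_right (by linarith : τ - R ≤ 0), intervalIntegral.integral_same, mul_zero,
      add_zero] at h
    exact h
  -- value at 0 by continuity
  have h0 : H 0 ≤ 2 * ε * Real.exp 0 := by
    have hlim : Filter.Tendsto H (nhdsWithin 0 (Set.Ioi 0)) (nhds (H 0)) :=
      Filter.Tendsto.mono_left (hHc 0 Set.self_mem_Ici)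
        (nhdsWithin_mono 0 Set.Ioi_subset_Ici_self)
    have hlim2 : Filter.Tendsto (fun t => ε * Real.exp t) (nhdsWithin 0 (Set.Ioi 0))
        (nhds (ε * Real.exp 0)) :=
      ((continuous_const.mul Real.continuous_exp).tendsto 0).mono_left nhdsWithin_le_nhds
    have hev : ∀ᶠ t in nhdsWithin 0 (Set.Ioi 0), H t ≤ ε * Real.exp t := by
      filter_upwards [Ioo_mem_nhdsGT_of_mem (Set.mem_Ico.2 ⟨le_rfl, hR⟩)] with t ht
      exact hsmall t ht.1 ht.2.le
    have := le_of_tendsto_of_tendsto hlim hlim2 hev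
    nlinarith [Real.exp_pos (0:ℝ)]
  -- main induction on multiples of R
  have key : ∀ n : ℕ, ∀ τ : ℝ, 0 ≤ τ → τ ≤ n * R → ε * Real.exp τ ≤ θ →
      H τ ≤ 2 * ε * Real.exp τ := by
    intro n
    induction n with
    | zero =>
      intro τ h0τ hτ0 _
      have hτ : τ = 0 := le_antisymm (by simpa using hτ0) h0τ
      rw [hτ]; exact h0
    | succ n ih =>
      intro τ hτ0 hτn hτθ
      rcases eq_or_lt_of_le hτ0 with h | h
      · rw [← h]; exact h0
      rcases le_or_gt τ R with hle | hgt
      · have hs := hsmall τ h hle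
        nlinarith [Real.exp_pos τ]
      · set T := τ - R with hTdef
        have hT : 0 < T := by rw [hTdef]; linarith
        have hmax : max T 0 = T := max_eq_left hT.le
        have hεθ : ∀ s : ℝ, s ≤ τ → ε * Real.exp s ≤ θ := fun s hs =>
          le_trans (mul_le_mul_of_nonneg_left (Real.exp_le_exp.2 hs) hε.le) hτθ
        have hHs : ∀ s ∈ Set.Icc (0:ℝ) T, H s ≤ 2 * ε * Real.exp s := by
          intro s hs
          refine ih s hs.1 ?_ (hεθ s (by linarith [hs.2, hT.le]))
          have hTn : T ≤ n * R := by rw [hTdef]; push_cast at hτn; linarith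
          linarith [hs.2]
        set A := 4 * ε ^ 2 * Real.exp τ with hA
        obtain ⟨hGint, hGval⟩ := stmt12_aux δ T A hδ0 hδ1 hT (by positivity)
        have hbnn : ∀ s ∈ Set.Icc (0:ℝ) T, (0:ℝ) ≤ 1 - Real.exp (s - T) := by
          intro s hs
          have : Real.exp (s - T) ≤ 1 := Real.exp_le_one_iff.mpr (by linarith [hs.2])
          linarith
        have hbrw : ∀ s : ℝ, (1 : ℝ) - Real.exp (-(τ - s - R)) = 1 - Real.exp (s - T) := by
          intro s
          rw [hTdef]
          ring_nf
        have hfnn : ∀ s ∈ Set.Icc (0:ℝ) T,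
            0 ≤ Real.exp (τ - s) * H s ^ 2 / (1 - Real.exp (-(τ - s - R))) ^ δ := by
          intro s hs
          refine div_nonneg (mul_nonneg (Real.exp_pos _).le (sq_nonneg _)) ?_
          rw [hbrw s]
          exact Real.rpow_nonneg (hbnn s hs) _
        have hGnn : ∀ s ∈ Set.Icc (0:ℝ) T,
            0 ≤ A * (Real.exp s * (1 - Real.exp (s - T)) ^ (-δ)) := fun s hs =>
          mul_nonneg (by positivity) (mul_nonneg (Real.exp_pos s).le
            (Real.rpow_nonneg (hbnn s hs) _))
        have hfle : ∀ s ∈ Set.Icc (0:ℝ) T,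
            Real.exp (τ - s) * H s ^ 2 / (1 - Real.exp (-(τ - s - R))) ^ δ
              ≤ A * (Real.exp s * (1 - Real.exp (s - T)) ^ (-δ)) := by
          intro s hs
          have hb := hbnn s hs
          have hnum : Real.exp (τ - s) * H s ^ 2 ≤ A * Real.exp s := by
            have hH2 : H s ^ 2 ≤ (2 * ε * Real.exp s) ^ 2 := by
              have h1 := hHs s hs; have h2 := hHnn s hs.1; nlinarith
            have e1 : Real.exp (τ - s) * Real.exp s = Real.exp τ := by
              rw [← Real.exp_add]; ring_nf
            calc Real.exp (τ - s) * H s ^ 2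
                ≤ Real.exp (τ - s) * (2 * ε * Real.exp s) ^ 2 :=
                  mul_le_mul_of_nonneg_left hH2 (Real.exp_pos _).le
              _ = A * Real.exp s := by rw [hA]; nlinarith [e1, Real.exp_pos s]
          have hGeq : A * (Real.exp s * (1 - Real.exp (s - T)) ^ (-δ))
              = (A * Real.exp s) / (1 - Real.exp (s - T)) ^ δ := by
            rw [Real.rpow_neg hb, div_eq_mul_inv]; ring
          rw [hbrw s, hGeq]
          rcases eq_or_lt_of_le hb with hb0 | hb0
          · rw [← hb0, Real.zero_rpow hδ0.ne', div_zero, div_zero]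
          · exact (div_le_div_iff_of_pos_right (Real.rpow_pos_of_pos hb0 δ)).2 hnum
        have hfmeas : MeasureTheory.AEStronglyMeasurable
            (fun s => Real.exp (τ - s) * H s ^ 2 / (1 - Real.exp (-(τ - s - R))) ^ δ)
            (MeasureTheory.volume.restrict (Set.uIoc (0:ℝ) T)) := by
          rw [Set.uIoc_of_le hT.le]
          have hc1 : ContinuousOn (fun s => Real.exp (τ - s) * H s ^ 2) (Set.Ioc (0:ℝ) T) :=
            ((Real.continuous_exp.comp (continuous_const.sub continuous_id)).continuousOn).mul
              ((hHc.mono (fun x hx => le_of_lt hx.1)).pow 2)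
          have hc2 : Continuous (fun s : ℝ => (1 - Real.exp (-(τ - s - R))) ^ δ) := by
            rw [continuous_iff_continuousAt]
            intro x
            exact (Real.continuousAt_rpow_const _ _ (Or.inr hδ0.le)).comp
              (continuous_const.sub (Real.continuous_exp.comp
                (((continuous_const.sub continuous_id).sub continuous_const).neg))).continuousAt
          exact ((hc1.aemeasurable measurableSet_Ioc).div
            (hc2.aemeasurable.restrict)).aestronglyMeasurable
        have hfint : IntervalIntegrable
            (fun s => Real.exp (τ - s) * H s ^ 2 / (1 - Real.exp (-(τ - s - R))) ^ δ)
            MeasureTheory.volume 0 T := by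
          apply hGint.mono_fun hfmeas
          rw [Set.uIoc_of_le hT.le]
          refine (MeasureTheory.ae_restrict_iff' measurableSet_Ioc).2
            (Filter.Eventually.of_forall ?_)
          intro x hx
          have hx' : x ∈ Set.Icc (0:ℝ) T := Set.Ioc_subset_Icc_self hx
          simp only [Real.norm_of_nonneg (hfnn x hx'), Real.norm_of_nonneg (hGnn x hx')]
          exact hfle x hx'
        have hIle : (∫ s in (0:ℝ)..T,
              Real.exp (τ - s) * H s ^ 2 / (1 - Real.exp (-(τ - s - R))) ^ δ)
            ≤ ∫ s in (0:ℝ)..T, A * (Real.exp s * (1 - Real.exp (s - T)) ^ (-δ)) :=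
          intervalIntegral.integral_mono_on hT.le hfint hGint hfle
        have hmain := hHineq τ h
        rw [hmax] at hmain
        have hexpT : Real.exp T * Real.exp R = Real.exp τ := by
          rw [← Real.exp_add, hTdef]; ring_nf
        have hCbound : C * (∫ s in (0:ℝ)..T,
            Real.exp (τ - s) * H s ^ 2 / (1 - Real.exp (-(τ - s - R))) ^ δ)
              ≤ ε * Real.exp τ := by
          have h1 : C * (∫ s in (0:ℝ)..T,
              Real.exp (τ - s) * H s ^ 2 / (1 - Real.exp (-(τ - s - R))) ^ δ)
                ≤ C * (A * Real.exp T / (1 - δ)) :=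
            mul_le_mul_of_nonneg_left (hIle.trans hGval) hC.le
          refine h1.trans ?_
          rw [hA]
          have h2 : ε * Real.exp τ * (4 * C * Real.exp T) ≤ θ * (4 * C * Real.exp T) :=
            mul_le_mul_of_nonneg_right hτθ (by positivity)
          have hθeq : θ * (4 * C) = (1 - δ) * Real.exp R := by
            rw [hθdef]; field_simp
          have h3 : θ * (4 * C * Real.exp T) = (1 - δ) * Real.exp τ := by
            rw [← mul_assoc, hθeq]
            linear_combination (1 - δ) * hexpT
          have h4 := mul_le_mul_of_nonneg_left (h2.trans_eq h3) hε.le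
          have h5 : C * (4 * ε ^ 2 * Real.exp τ * Real.exp T / (1 - δ))
              = (C * (4 * ε ^ 2 * Real.exp τ * Real.exp T)) / (1 - δ) := by ring
          rw [h5, div_le_iff₀ h1δ]
          calc C * (4 * ε ^ 2 * Real.exp τ * Real.exp T)
              = ε * (ε * Real.exp τ * (4 * C * Real.exp T)) := by ring
            _ ≤ ε * ((1 - δ) * Real.exp τ) := h4
            _ = ε * Real.exp τ * (1 - δ) := by ring
        linarith [hmain, hCbound]
  intro τ hτ0 hτθ
  obtain ⟨n, hn⟩ := exists_nat_ge (τ / R)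
  refine key n τ hτ0 ?_ hτθ
  rw [div_le_iff₀ hR] at hn
  linarith
end

section
/- Let φ : [s₀, ∞) → (0, ∞) be a differentiable positive solution of the ordinary differential equation φ'(s) = -φ(s)/(p-1) + φ(s)^p + μ φ(s)^p / ( log(2 + e^{2s/(p-1)} φ(s)²) )^a, and assume φ(s) → κ as s → ∞. Then, setting η(s) = (κ / φ(s))^{p-1} - 1 (so that φ(s) = κ (1 + η(s))^{-1/(p-1)}), one has lim_{s → ∞} s^a η(s) = μ ((p-1)/2)^a. -/
open Real Filter MeasureTheory Set

lemma int_exp_half (s : ℝ) : ∫ t in Set.Ioi s, Real.exp (-(t / 2)) = 2 * Real.exp (-(s / 2)) := by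
  have h := MeasureTheory.integral_comp_mul_right_Ioi (fun x => Real.exp (-x)) s
    (by norm_num : (0:ℝ) < 1/2)
  rw [integral_exp_neg_Ioi] at h
  simp only [smul_eq_mul] at h
  calc ∫ t in Set.Ioi s, Real.exp (-(t / 2)) = ∫ t in Set.Ioi s, Real.exp (-(t * (1/2))) := by
        congr 1; funext t; ring_nf
    _ = 2 * Real.exp (-(s/2)) := by rw [h]; norm_num; ring_nf

lemma mul_exp_bound {u : ℝ} (hu : 0 ≤ u) : u * Real.exp (-u) ≤ 2 * Real.exp (-(u / 2)) := by
  have h1 : u / 2 ≤ Real.exp (u / 2) := le_trans (by linarith) (Real.add_one_le_exp _)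
  have h2 : Real.exp (-u) = Real.exp (-(u/2)) * Real.exp (-(u/2)) := by
    rw [← Real.exp_add]; ring_nf
  have h3 : Real.exp (u/2) * Real.exp (-(u/2)) = 1 := by rw [← Real.exp_add]; ring_nf; exact Real.exp_zero
  have h4 : (0:ℝ) < Real.exp (-(u/2)) := Real.exp_pos _
  nlinarith [Real.exp_pos (u/2)]

lemma rpow_ratio_bound {s t a : ℝ} (ha : 0 < a) (hs : 0 < s) (hst : s ≤ t) :
    1 - a * (t - s) / s ≤ (s / t) ^ a ∧ (s / t) ^ a ≤ 1 := by
  have ht : 0 < t := lt_of_lt_of_le hs hst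
  have hd : 0 < s / t := div_pos hs ht
  constructor
  · have hlog : Real.log (t / s) ≤ (t - s) / s := by
      have := Real.log_le_sub_one_of_pos (div_pos ht hs)
      calc Real.log (t/s) ≤ t/s - 1 := this
        _ = (t - s)/s := by field_simp
    have h1 : (s/t) ^ a = Real.exp (a * Real.log (s/t)) := by
      rw [Real.rpow_def_of_pos hd]; ring_nf
    rw [h1]
    have h2 : Real.log (s/t) = - Real.log (t/s) := by
      rw [← Real.log_inv]; congr 1; field_simp
    have h3 : 1 + a * Real.log (s/t) ≤ Real.exp (a * Real.log (s/t)) := by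
      linarith [Real.add_one_le_exp (a * Real.log (s/t))]
    have h4 : -(a * (t-s)/s) ≤ a * Real.log (s/t) := by
      rw [h2]
      have := mul_le_mul_of_nonneg_left hlog ha.le
      have : a * (t-s)/s = a * ((t-s)/s) := by ring
      linarith [mul_le_mul_of_nonneg_left hlog ha.le]
    linarith
  · apply Real.rpow_le_one hd.le
    · exact div_le_one_of_le₀ hst ht.le
    · exact ha.le

lemma integrable_expg {g : ℝ → ℝ} {S₀ : ℝ}
    (hgc : ∀ t, S₀ ≤ t → ContinuousAt g t)
    (hgb : ∀ t, S₀ ≤ t → |g t| ≤ 1)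
    {s : ℝ} (hs : S₀ ≤ s) :
    IntegrableOn (fun t => Real.exp (-t) * g t) (Set.Ioi s) := by
  have hmeas : AEStronglyMeasurable (fun t => Real.exp (-t) * g t)
      (volume.restrict (Set.Ioi s)) := by
    apply ContinuousOn.aestronglyMeasurable _ measurableSet_Ioi
    intro t ht
    exact (((Real.continuous_exp.comp continuous_neg).continuousAt).mul
      (hgc t (hs.trans (le_of_lt ht)))).continuousWithinAt
  have hexp : IntegrableOn (fun t => Real.exp (-t)) (Set.Ioi s) := by
    have := exp_neg_integrableOn_Ioi s (zero_lt_one)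
    simpa using this
  refine Integrable.mono' hexp hmeas ?_
  rw [ae_restrict_iff' measurableSet_Ioi]
  filter_upwards with t ht
  have h1 := hgb t (hs.trans (le_of_lt ht))
  have h2 : (0:ℝ) < Real.exp (-t) := Real.exp_pos _
  rw [norm_mul, Real.norm_eq_abs, Real.norm_eq_abs, abs_of_pos h2]
  nlinarith

lemma rep_lemma {g η : ℝ → ℝ} {S₀ : ℝ}
    (hgc : ∀ t, S₀ ≤ t → ContinuousAt g t)
    (hder : ∀ s, S₀ ≤ s → HasDerivAt η (η s - g s) s)
    (hη0 : Tendsto η atTop (nhds 0))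
    (hgb : ∀ t, S₀ ≤ t → |g t| ≤ 1)
    {s : ℝ} (hs : S₀ ≤ s) :
    Real.exp (-s) * η s = ∫ t in Set.Ioi s, Real.exp (-t) * g t := by
  set h : ℝ → ℝ := fun t => Real.exp (-t) * η t with hh
  have hders : ∀ t, S₀ ≤ t → HasDerivAt h (-(Real.exp (-t) * g t)) t := by
    intro t ht
    have h1 : HasDerivAt (fun t : ℝ => Real.exp (-t)) (Real.exp (-t) * (-1)) t :=
      (hasDerivAt_neg t).exp
    have := h1.mul (hder t ht)
    refine this.congr_deriv ?_
    ring
  -- FTC on [s, T]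
  have hint : ∀ T, s ≤ T → IntervalIntegrable (fun t => Real.exp (-t) * g t) volume s T := by
    intro T hT
    apply ContinuousOn.intervalIntegrable
    intro t ht
    rw [Set.uIcc_of_le hT] at ht
    exact (((Real.continuous_exp.comp continuous_neg).continuousAt).mul
      (hgc t (hs.trans ht.1))).continuousWithinAt
  have hftc : ∀ T, s ≤ T → h s - h T = ∫ t in s..T, Real.exp (-t) * g t := by
    intro T hT
    have := intervalIntegral.integral_eq_sub_of_hasDerivAt
      (f := h) (f' := fun t => -(Real.exp (-t) * g t)) (a := s) (b := T)
      (fun t ht => by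
        rw [Set.uIcc_of_le hT] at ht
        exact hders t (hs.trans ht.1))
      ((hint T hT).neg)
    rw [intervalIntegral.integral_neg] at this
    linarith
  have hIoi := integrable_expg hgc hgb hs
  have hlim1 : Tendsto (fun T => ∫ t in s..T, Real.exp (-t) * g t) atTop
      (nhds (∫ t in Set.Ioi s, Real.exp (-t) * g t)) :=
    intervalIntegral_tendsto_integral_Ioi s hIoi tendsto_id
  have hlim2 : Tendsto (fun T => h s - h T) atTop (nhds (h s)) := by
    have hT0 : Tendsto h atTop (nhds 0) := by
      have he : Tendsto (fun T : ℝ => Real.exp (-T)) atTop (nhds 0) := by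
        exact Real.tendsto_exp_atBot.comp tendsto_neg_atTop_atBot
      simpa using he.mul hη0
    simpa using tendsto_const_nhds.sub hT0
  have := tendsto_nhds_unique
    (hlim2.congr' (by filter_upwards [eventually_ge_atTop s] with T hT using hftc T hT)) hlim1
  exact this

lemma key_lemma {a : ℝ} (ha : 0 < a) {g η : ℝ → ℝ} {c S₀ : ℝ}
    (hgc : ∀ t, S₀ ≤ t → ContinuousAt g t)
    (hder : ∀ s, S₀ ≤ s → HasDerivAt η (η s - g s) s)
    (hη0 : Tendsto η atTop (nhds 0))
    (hg : Tendsto (fun s => s ^ a * g s) atTop (nhds c)) :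
    Tendsto (fun s => s ^ a * η s) atTop (nhds c) := by
  -- g tends to 0
  have hg0 : Tendsto g atTop (nhds 0) := by
    have h1 : Tendsto (fun s : ℝ => s ^ (-a) * (s ^ a * g s)) atTop (nhds (0 * c)) :=
      (tendsto_rpow_neg_atTop ha).mul hg
    rw [zero_mul] at h1
    apply h1.congr'
    filter_upwards [eventually_gt_atTop (0:ℝ)] with s hs
    rw [← mul_assoc, ← Real.rpow_add hs]
    simp
  -- eventual bound
  have hb : ∀ᶠ t in atTop, |g t| ≤ 1 := by
    filter_upwards [Metric.tendsto_nhds.mp hg0 1 one_pos] with t ht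
    rw [Real.dist_eq, sub_zero] at ht
    exact ht.le
  obtain ⟨S₁, hS₁⟩ := (hb.and (eventually_ge_atTop S₀)).exists_forall_of_atTop
  -- representation for s ≥ S₁
  have hrep : ∀ s, S₁ ≤ s →
      Real.exp (-s) * η s = ∫ t in Set.Ioi s, Real.exp (-t) * g t := by
    intro s hs
    exact rep_lemma (S₀ := S₁) (fun t ht => hgc t (hS₁ t ht).2)
      (fun t ht => hder t (hS₁ t ht).2) hη0 (fun t ht => (hS₁ t ht).1) hs
  have hIoi : ∀ s, S₁ ≤ s → IntegrableOn (fun t => Real.exp (-t) * g t) (Set.Ioi s) :=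
    fun s hs => integrable_expg (S₀ := S₁) (fun t ht => hgc t (hS₁ t ht).2)
      (fun t ht => (hS₁ t ht).1) hs
  rw [Metric.tendsto_atTop]
  intro ε hε
  obtain ⟨S₂, hS₂⟩ := (Metric.tendsto_atTop.mp hg (ε/2) (by linarith))
  refine ⟨max (max S₁ S₂) (max 1 (16 * (|c| * a + 1) / ε)), fun s hs => ?_⟩
  have hs1 : S₁ ≤ s := le_trans (le_trans (le_max_left _ _) (le_max_left _ _)) hs
  have hs2 : S₂ ≤ s := le_trans (le_trans (le_max_right _ _) (le_max_left _ _)) hs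
  have hs3 : (1:ℝ) ≤ s := le_trans (le_trans (le_max_left _ _) (le_max_right _ _)) hs
  have hs4 : 16 * (|c| * a + 1) / ε ≤ s :=
    le_trans (le_trans (le_max_right _ _) (le_max_right _ _)) hs
  have hs0 : (0:ℝ) < s := lt_of_lt_of_le one_pos hs3
  -- the integrand F and its bound
  set F : ℝ → ℝ := fun t => Real.exp (s - t) * (s ^ a * g t - c) with hF
  have hFeq : F = fun t => (Real.exp s * s ^ a) * (Real.exp (-t) * g t)
      - (Real.exp s * c) * Real.exp (-t) := by
    funext t
    rw [hF]
    simp only [Real.exp_sub, Real.exp_neg]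
    field_simp
  have hexpint : IntegrableOn (fun t => Real.exp (-t)) (Set.Ioi s) := by
    simpa using exp_neg_integrableOn_Ioi s zero_lt_one
  have hFint : IntegrableOn F (Set.Ioi s) := by
    rw [hFeq]
    exact ((hIoi s hs1).const_mul _).sub (hexpint.const_mul _)
  -- value of the integral of F
  have hηs : η s = Real.exp s * ∫ t in Set.Ioi s, Real.exp (-t) * g t := by
    have := hrep s hs1
    have he : Real.exp s * Real.exp (-s) = 1 := by
      rw [← Real.exp_add]; simp
    calc η s = Real.exp s * (Real.exp (-s) * η s) := by
          rw [← mul_assoc, he, one_mul]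
      _ = Real.exp s * ∫ t in Set.Ioi s, Real.exp (-t) * g t := by rw [this]
  have hFval : ∫ t in Set.Ioi s, F t = s ^ a * η s - c := by
    rw [hFeq]
    rw [MeasureTheory.integral_sub ((hIoi s hs1).const_mul _) (hexpint.const_mul _),
      MeasureTheory.integral_const_mul, MeasureTheory.integral_const_mul,
      integral_exp_neg_Ioi]
    rw [hηs]
    have he : Real.exp s * Real.exp (-s) = 1 := by rw [← Real.exp_add]; simp
    linear_combination (-c) * he
  -- the dominating function
  set B : ℝ → ℝ := fun t => ε/2 * Real.exp (-(t - s))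
      + (2 * (|c| * a) / s) * Real.exp (-((t - s)/2)) with hB
  have hB1int : IntegrableOn (fun t => Real.exp (-(t - s))) (Set.Ioi s) := by
    have : (fun t : ℝ => Real.exp (-(t - s))) = fun t => Real.exp s * Real.exp (-t) := by
      funext t; rw [← Real.exp_add]; ring_nf
    rw [this]
    exact hexpint.const_mul _
  have hB2int : IntegrableOn (fun t => Real.exp (-((t - s)/2))) (Set.Ioi s) := by
    have hhalf : IntegrableOn (fun t => Real.exp (-(t/2))) (Set.Ioi s) := by
      have := exp_neg_integrableOn_Ioi s (by norm_num : (0:ℝ) < 1/2)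
      apply this.congr_fun _ measurableSet_Ioi
      intro t ht; norm_num; ring_nf
    have : (fun t : ℝ => Real.exp (-((t - s)/2))) = fun t => Real.exp (s/2) * Real.exp (-(t/2)) := by
      funext t; rw [← Real.exp_add]; ring_nf
    rw [this]
    exact hhalf.const_mul _
  have hBint : IntegrableOn B (Set.Ioi s) := (hB1int.const_mul _).add (hB2int.const_mul _)
  -- pointwise bound
  have hptwise : ∀ t ∈ Set.Ioi s, ‖F t‖ ≤ B t := by
    intro t ht
    rw [Set.mem_Ioi] at ht
    have ht0 : 0 < t := lt_trans hs0 ht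
    have hta : (0:ℝ) < t ^ a := Real.rpow_pos_of_pos ht0 a
    obtain ⟨hlo, hhi⟩ := rpow_ratio_bound ha hs0 ht.le
    have hsp : (0:ℝ) ≤ (s/t) ^ a := Real.rpow_nonneg (div_pos hs0 ht0).le a
    have hsplit : s ^ a * g t - c = (s/t)^a * (t^a * g t - c) + ((s/t)^a - 1) * c := by
      have h1 : (s/t)^a = s^a / t^a := Real.div_rpow hs0.le ht0.le a
      rw [h1]
      field_simp
      ring
    have hg2 : |t ^ a * g t - c| ≤ ε/2 := by
      have := hS₂ t (le_trans hs2 ht.le)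
      rw [Real.dist_eq] at this
      exact this.le
    have habs : |s ^ a * g t - c| ≤ ε/2 + a * (t - s)/s * |c| := by
      rw [hsplit]
      refine le_trans (abs_add_le _ _) ?_
      have e1 : |(s/t)^a * (t^a * g t - c)| ≤ ε/2 := by
        rw [abs_mul, abs_of_nonneg hsp]
        calc (s/t)^a * |t^a * g t - c| ≤ 1 * (ε/2) :=
              mul_le_mul hhi hg2 (abs_nonneg _) zero_le_one
          _ = ε/2 := one_mul _
      have e2 : |((s/t)^a - 1) * c| ≤ a * (t - s)/s * |c| := by
        rw [abs_mul]
        apply mul_le_mul_of_nonneg_right _ (abs_nonneg c)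
        rw [abs_sub_comm, abs_of_nonneg (by linarith : (0:ℝ) ≤ 1 - (s/t)^a)]
        linarith
      linarith
    have hexp1 : ‖F t‖ = Real.exp (s - t) * |s ^ a * g t - c| := by
      rw [hF]
      rw [Real.norm_eq_abs, abs_mul, abs_of_pos (Real.exp_pos _)]
    rw [hexp1, hB]
    have hst : Real.exp (s - t) = Real.exp (-(t - s)) := by ring_nf
    have hkey : Real.exp (-(t - s)) * (a * (t - s)/s * |c|) ≤
        2 * (|c| * a) / s * Real.exp (-((t - s)/2)) := by
      have hu : (0:ℝ) ≤ t - s := by linarith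
      have := mul_exp_bound hu
      have hca : 0 ≤ |c| * a / s := by positivity
      calc Real.exp (-(t - s)) * (a * (t - s)/s * |c|)
          = (|c| * a / s) * ((t - s) * Real.exp (-(t - s))) := by ring
        _ ≤ (|c| * a / s) * (2 * Real.exp (-((t - s)/2))) :=
            mul_le_mul_of_nonneg_left this hca
        _ = 2 * (|c| * a) / s * Real.exp (-((t - s)/2)) := by ring
    have hε2 : Real.exp (s - t) * (ε/2) ≤ ε/2 * Real.exp (-(t - s)) := by
      rw [hst]; ring_nf; rfl
    calc Real.exp (s - t) * |s ^ a * g t - c|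
        ≤ Real.exp (s - t) * (ε/2 + a * (t - s)/s * |c|) :=
          mul_le_mul_of_nonneg_left habs (Real.exp_pos _).le
      _ = Real.exp (s - t) * (ε/2) + Real.exp (-(t-s)) * (a * (t - s)/s * |c|) := by
          rw [hst]; ring
      _ ≤ ε/2 * Real.exp (-(t - s)) + 2 * (|c| * a) / s * Real.exp (-((t - s)/2)) := by
          have := hε2; linarith [hkey]
  -- integral of the bound
  have hBval : ∫ t in Set.Ioi s, B t = ε/2 + 4 * (|c| * a) / s := by
    rw [hB]
    rw [MeasureTheory.integral_add (hB1int.const_mul _) (hB2int.const_mul _),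
      MeasureTheory.integral_const_mul, MeasureTheory.integral_const_mul]
    have i1 : ∫ t in Set.Ioi s, Real.exp (-(t - s)) = 1 := by
      have : (fun t : ℝ => Real.exp (-(t - s))) = fun t => Real.exp s * Real.exp (-t) := by
        funext t; rw [← Real.exp_add]; ring_nf
      rw [this, MeasureTheory.integral_const_mul, integral_exp_neg_Ioi, ← Real.exp_add]
      simp
    have i2 : ∫ t in Set.Ioi s, Real.exp (-((t - s)/2)) = 2 := by
      have : (fun t : ℝ => Real.exp (-((t - s)/2))) = fun t => Real.exp (s/2) * Real.exp (-(t/2)) := by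
        funext t; rw [← Real.exp_add]; ring_nf
      rw [this, MeasureTheory.integral_const_mul, int_exp_half, ← mul_assoc,
        mul_comm (Real.exp (s/2)) 2, mul_assoc, ← Real.exp_add]
      simp
    rw [i1, i2]
    ring
  -- conclude
  have hfinal : |s ^ a * η s - c| ≤ ε/2 + 4 * (|c| * a) / s := by
    rw [← hFval, ← hBval]
    calc |∫ t in Set.Ioi s, F t| ≤ ∫ t in Set.Ioi s, ‖F t‖ :=
          MeasureTheory.norm_integral_le_integral_norm F
      _ ≤ ∫ t in Set.Ioi s, B t :=
          MeasureTheory.setIntegral_mono_on hFint.norm hBint measurableSet_Ioi hptwise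
  rw [Real.dist_eq]
  have h16 : 4 * (|c| * a) / s ≤ ε / 4 := by
    rw [div_le_iff₀ hs0]
    have hεs : 16 * (|c| * a + 1) ≤ ε * s := by
      rw [ge_iff_le, div_le_iff₀ hε] at *
      nlinarith [hs4, hε]
    nlinarith [abs_nonneg c, ha.le, hε]
  calc |s ^ a * η s - c| ≤ ε/2 + 4 * (|c| * a) / s := hfinal
    _ ≤ ε/2 + ε/4 := by linarith
    _ < ε := by linarith


lemma kappa_rpow {p : ℝ} (hp : 1 < p) : ((p-1) ^ (-(1/(p-1)))) ^ (p-1) = (p-1)⁻¹ := by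
  have h1 : (0:ℝ) < p - 1 := by linarith
  rw [← Real.rpow_mul h1.le]
  have : -(1/(p-1)) * (p-1) = -1 := by field_simp
  rw [this, Real.rpow_neg_one]

lemma eta_deriv {p : ℝ} (hp : 1 < p) {a : ℝ} {μ : ℝ} {s₀ : ℝ} {φ : ℝ → ℝ}
    (hpos : ∀ s, s₀ ≤ s → 0 < φ s)
    (hode : ∀ s, s₀ ≤ s → HasDerivAt φ
      (-(φ s) / (p - 1) + φ s ^ p +
        μ * φ s ^ p / (Real.log (2 + Real.exp (2 * s / (p - 1)) * φ s ^ 2)) ^ a) s)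
    {s : ℝ} (hs : s₀ ≤ s) :
    HasDerivAt (fun s => (((p-1) ^ (-(1/(p-1)))) / φ s) ^ (p-1) - 1)
      (((((p-1) ^ (-(1/(p-1)))) / φ s) ^ (p-1) - 1) -
        μ / (Real.log (2 + Real.exp (2 * s / (p - 1)) * φ s ^ 2)) ^ a) s := by
  have hp1 : (0:ℝ) < p - 1 := by linarith
  set κ : ℝ := (p-1) ^ (-(1/(p-1))) with hκdef
  have hκ : 0 < κ := Real.rpow_pos_of_pos hp1 _
  have hx : 0 < φ s := hpos s hs
  set x : ℝ := φ s with hxdef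
  set A : ℝ := (Real.log (2 + Real.exp (2 * s / (p - 1)) * φ s ^ 2)) ^ a with hA
  set D : ℝ := -(φ s) / (p - 1) + φ s ^ p + μ * φ s ^ p / A with hD
  have hdiv : HasDerivAt (fun s => κ / φ s) ((0 * x - κ * D) / x ^ 2) s :=
    (hasDerivAt_const s κ).div (hode s hs) hx.ne'
  have hne : κ / x ≠ 0 := (div_pos hκ hx).ne'
  have hrpow := (hdiv.rpow_const (p := p - 1) (Or.inl hne)).sub_const 1
  refine hrpow.congr_deriv ?_
  -- now the algebra
  have h6 : κ ^ (p-1) = (p-1)⁻¹ := kappa_rpow hp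
  have h5 : κ * κ ^ (p-1-1) = κ ^ (p-1) := by
    nth_rewrite 1 [← Real.rpow_one κ]
    rw [← Real.rpow_add hκ]; ring_nf
  have h7 : x ^ (-(p-1-1)) / x ^ 2 = x ^ (-p) := by
    rw [show (x:ℝ) ^ (2:ℕ) = x ^ (2:ℝ) by rw [← Real.rpow_natCast x 2]; norm_num,
      ← Real.rpow_sub hx]
    ring_nf
  have h3 : (κ / x) ^ (p-1) = κ ^ (p-1) * x ^ (-(p-1)) := by
    rw [Real.div_rpow hκ.le hx.le, Real.rpow_neg hx.le, div_eq_mul_inv]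
  have h4 : (κ / x) ^ (p-1-1) = κ ^ (p-1-1) * x ^ (-(p-1-1)) := by
    rw [Real.div_rpow hκ.le hx.le, Real.rpow_neg hx.le, div_eq_mul_inv]
  have h1 : x ^ p * x ^ (-p) = 1 := by
    rw [← Real.rpow_add hx]; simp
  have h2 : x * x ^ (-p) = x ^ (-(p-1)) := by
    nth_rewrite 1 [← Real.rpow_one x]
    rw [← Real.rpow_add hx]; ring_nf
  have hE : (0 * x - κ * D) / x ^ 2 * (p-1) * ((κ/x) ^ (p-1-1)) = -(D * x ^ (-p)) := by
    rw [h4]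
    have hx2 : (x:ℝ) ^ (2:ℕ) ≠ 0 := pow_ne_zero 2 hx.ne'
    calc (0 * x - κ * D) / x ^ 2 * (p-1) * (κ ^ (p-1-1) * x ^ (-(p-1-1)))
        = (p-1) * (κ * κ ^ (p-1-1)) * (x ^ (-(p-1-1)) / x ^ 2) * (-D) := by
          field_simp; ring
      _ = (p-1) * (p-1)⁻¹ * x ^ (-p) * (-D) := by rw [h5, h7, h6]
      _ = -(D * x ^ (-p)) := by field_simp
  rw [show (0 * x - κ * D) / x ^ 2 * (p - 1) * (κ / x) ^ (p - 1 - 1) =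
      (0 * x - κ * D) / x ^ 2 * (p-1) * ((κ/x) ^ (p-1-1)) from rfl, hE]
  have hexp : -(D * x ^ (-p)) = (x * x ^ (-p))/(p-1) - (x ^ p * x ^ (-p))
      - μ * (x ^ p * x ^ (-p)) / A := by
    rw [hD]; push_cast; field_simp; ring
  rw [hexp, h1, h2, h3, h6]
  ring

lemma eta_tendsto {p : ℝ} (hp : 1 < p) {φ : ℝ → ℝ}
    (hlim : Tendsto φ atTop (nhds ((p - 1) ^ (-(1 / (p - 1)))))) :
    Tendsto (fun s => (((p-1) ^ (-(1/(p-1)))) / φ s) ^ (p-1) - 1) atTop (nhds 0) := by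
  have hp1 : (0:ℝ) < p - 1 := by linarith
  have hκ : 0 < (p-1) ^ (-(1/(p-1))) := Real.rpow_pos_of_pos hp1 _
  have h1 : Tendsto (fun s => ((p-1) ^ (-(1/(p-1)))) / φ s) atTop (nhds 1) := by
    have h0 : Tendsto (fun s : ℝ => ((p-1) ^ (-(1/(p-1)))) / φ s) atTop
        (nhds (((p-1) ^ (-(1/(p-1)))) / ((p-1) ^ (-(1/(p-1)))))) :=
      Tendsto.div tendsto_const_nhds hlim hκ.ne'
    rwa [div_self hκ.ne'] at h0
  have h2 : ContinuousAt (fun x : ℝ => x ^ (p-1)) 1 :=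
    Real.continuousAt_rpow_const 1 (p-1) (Or.inl one_ne_zero)
  have h3 := (h2.tendsto.comp h1)
  rw [Real.one_rpow] at h3
  simpa using h3.sub_const 1

lemma g_tendsto {p : ℝ} (hp : 1 < p) {a : ℝ} (ha : 0 < a) {μ : ℝ} {φ : ℝ → ℝ}
    (hlim : Tendsto φ atTop (nhds ((p - 1) ^ (-(1 / (p - 1)))))) :
    Tendsto (fun s => s ^ a *
        (μ / (Real.log (2 + Real.exp (2 * s / (p - 1)) * φ s ^ 2)) ^ a))
      atTop (nhds (μ * ((p - 1) / 2) ^ a)) := by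
  have hp1 : (0:ℝ) < p - 1 := by linarith
  have hκ : 0 < (p-1) ^ (-(1/(p-1))) := Real.rpow_pos_of_pos hp1 _
  set κ : ℝ := (p-1) ^ (-(1/(p-1))) with hκdef
  set L : ℝ → ℝ := fun s => Real.log (2 + Real.exp (2 * s / (p - 1)) * φ s ^ 2) with hLdef
  have hinner : ∀ s : ℝ, 0 < 2 * Real.exp (-(2 * s / (p-1))) + φ s ^ 2 := by
    intro s; positivity
  have hL : ∀ s : ℝ, L s = 2*s/(p-1) + Real.log (2 * Real.exp (-(2*s/(p-1))) + φ s ^ 2) := by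
    intro s
    have hE : Real.exp (2*s/(p-1)) ≠ 0 := (Real.exp_pos _).ne'
    have : (2 : ℝ) + Real.exp (2*s/(p-1)) * φ s ^ 2 =
        Real.exp (2*s/(p-1)) * (2 * Real.exp (-(2*s/(p-1))) + φ s ^ 2) := by
      rw [mul_add, ← mul_assoc, mul_comm (Real.exp (2*s/(p-1))) 2, mul_assoc,
        ← Real.exp_add]
      simp
    rw [hLdef]
    simp only
    rw [this, Real.log_mul hE (hinner s).ne', Real.log_exp]
  have hLpos : ∀ s : ℝ, 0 < L s := by
    intro s
    apply Real.log_pos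
    have : (0:ℝ) ≤ Real.exp (2*s/(p-1)) * φ s ^ 2 := by positivity
    linarith
  -- inner log tendsto
  have hexp0 : Tendsto (fun s : ℝ => Real.exp (-(2*s/(p-1)))) atTop (nhds 0) := by
    apply Real.tendsto_exp_atBot.comp
    apply Filter.tendsto_neg_atTop_atBot.comp
    apply Tendsto.atTop_div_const hp1
    exact (tendsto_id.const_mul_atTop two_pos)
  have hφ2 : Tendsto (fun s => φ s ^ 2) atTop (nhds (κ ^ 2)) := hlim.pow 2
  have hinlim : Tendsto (fun s => 2 * Real.exp (-(2*s/(p-1))) + φ s ^ 2) atTop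
      (nhds (κ ^ 2)) := by
    have := (hexp0.const_mul 2).add hφ2
    simpa using this
  have hloglim : Tendsto (fun s => Real.log (2 * Real.exp (-(2*s/(p-1))) + φ s ^ 2)) atTop
      (nhds (Real.log (κ ^ 2))) :=
    ((Real.continuousAt_log (by positivity : (κ:ℝ)^2 ≠ 0)).tendsto.comp hinlim)
  -- L s / s tendsto
  have hLs : Tendsto (fun s => L s / s) atTop (nhds (2/(p-1))) := by
    have h0 : Tendsto (fun s : ℝ => 2/(p-1) +
        Real.log (2 * Real.exp (-(2*s/(p-1))) + φ s ^ 2) / s) atTop (nhds (2/(p-1) + 0)) :=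
      tendsto_const_nhds.add (hloglim.div_atTop tendsto_id)
    rw [add_zero] at h0
    apply h0.congr'
    filter_upwards [eventually_gt_atTop (0:ℝ)] with s hs
    rw [hL s]
    field_simp
  have hsL : Tendsto (fun s => s / L s) atTop (nhds ((p-1)/2)) := by
    have h0 := hLs.inv₀ (by positivity : (2:ℝ)/(p-1) ≠ 0)
    have : ((2:ℝ)/(p-1))⁻¹ = (p-1)/2 := by rw [inv_div]
    rw [this] at h0
    apply h0.congr
    intro s; rw [inv_div]
  have hsLa : Tendsto (fun s => (s / L s) ^ a) atTop (nhds (((p-1)/2) ^ a)) := by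
    have hc : ContinuousAt (fun x : ℝ => x ^ a) ((p-1)/2) :=
      Real.continuousAt_rpow_const _ _ (Or.inl (by positivity))
    exact hc.tendsto.comp hsL
  have hfinal : Tendsto (fun s => μ * (s / L s) ^ a) atTop (nhds (μ * ((p-1)/2) ^ a)) :=
    Tendsto.mul tendsto_const_nhds hsLa
  apply hfinal.congr'
  filter_upwards [eventually_gt_atTop (0:ℝ)] with s hs
  have hLa : (0:ℝ) < (L s) ^ a := Real.rpow_pos_of_pos (hLpos s) a
  rw [Real.div_rpow hs.le (hLpos s).le]
  rw [hLdef]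
  simp only
  field_simp

lemma g_continuous {p : ℝ} (hp : 1 < p) {a : ℝ} (ha : 0 < a) {μ : ℝ} {s₀ : ℝ} {φ : ℝ → ℝ}
    (hode : ∀ s, s₀ ≤ s → HasDerivAt φ
      (-(φ s) / (p - 1) + φ s ^ p +
        μ * φ s ^ p / (Real.log (2 + Real.exp (2 * s / (p - 1)) * φ s ^ 2)) ^ a) s)
    {t : ℝ} (ht : s₀ ≤ t) :
    ContinuousAt (fun s => μ / (Real.log (2 + Real.exp (2 * s / (p - 1)) * φ s ^ 2)) ^ a) t := by
  have hφc : ContinuousAt φ t := (hode t ht).continuousAt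
  have hexpc : Continuous (fun s : ℝ => Real.exp (2 * s / (p - 1))) := by fun_prop
  have h1 : ContinuousAt (fun s : ℝ => 2 + Real.exp (2*s/(p-1)) * φ s ^ 2) t :=
    continuousAt_const.add (hexpc.continuousAt.mul (hφc.pow 2))
  have hpos : (0:ℝ) < 2 + Real.exp (2*t/(p-1)) * φ t ^ 2 := by positivity
  have hgt1 : (1:ℝ) < 2 + Real.exp (2*t/(p-1)) * φ t ^ 2 := by
    have : (0:ℝ) ≤ Real.exp (2*t/(p-1)) * φ t ^ 2 := by positivity
    linarith
  have hlog : ContinuousAt (fun s : ℝ => Real.log (2 + Real.exp (2*s/(p-1)) * φ s ^ 2)) t :=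
    h1.log hpos.ne'
  have hLpos : 0 < Real.log (2 + Real.exp (2*t/(p-1)) * φ t ^ 2) := Real.log_pos hgt1
  have hLa : ContinuousAt
      (fun s : ℝ => (Real.log (2 + Real.exp (2*s/(p-1)) * φ s ^ 2)) ^ a) t :=
    hlog.rpow_const (Or.inr ha.le)
  exact ContinuousAt.div continuousAt_const hLa (Real.rpow_pos_of_pos hLpos a).ne'

/-- Asymptotic expansion of the ODE solution `φ`:
if `φ` solves `φ' = -φ/(p-1) + φ^p + μ φ^p / (log(2 + e^{2s/(p-1)} φ²))^a` and `φ(s) → κ`,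
then `η(s) = (κ/φ(s))^{p-1} - 1` satisfies `s^a η(s) → μ ((p-1)/2)^a`. -/
theorem stmt13 (p : ℝ) (hp : 1 < p) (a : ℝ) (ha : 0 < a) (μ : ℝ)
    (s₀ : ℝ) (φ : ℝ → ℝ) (hpos : ∀ s, s₀ ≤ s → 0 < φ s)
    (hode : ∀ s, s₀ ≤ s → HasDerivAt φ
      (-(φ s) / (p - 1) + φ s ^ p +
        μ * φ s ^ p / (Real.log (2 + Real.exp (2 * s / (p - 1)) * φ s ^ 2)) ^ a) s)
    (hlim : Tendsto φ atTop (nhds ((p - 1) ^ (-(1 / (p - 1)))))) :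
    Tendsto (fun s : ℝ => s ^ a * (((p - 1) ^ (-(1 / (p - 1))) / φ s) ^ (p - 1) - 1))
      atTop (nhds (μ * ((p - 1) / 2) ^ a)) := by
  exact key_lemma ha (fun t ht => g_continuous hp ha hode ht)
    (fun s hs => eta_deriv hp hpos hode hs) (eta_tendsto hp hlim) (g_tendsto hp ha hlim)
end

section
/- Let a > 0, γ > 0, C ≥ 0 and s₀ > 0. Let E : [s₀, ∞) → ℝ be differentiable and D : [s₀, ∞) → [0, ∞) be continuous, and assume that for all s ≥ s₀: E'(s) ≤ -D(s) + γ s^{-(a+1)} E(s) + C s^{-(a+1)}. Then for every θ ≥ (C/a) e^{(γ/a) s₀^{-a}}, the function J(s) = E(s) e^{(γ/a) s^{-a}} + θ s^{-a} satisfies J(s₂) - J(s₁) ≤ - ∫_{s₁}^{s₂} D(s) ds for all s₀ ≤ s₁ ≤ s₂. -/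
open Real

/-- Abstract monotonicity argument for the Lyapunov functional. -/
theorem stmt19 (a γ C s₀ : ℝ) (ha : 0 < a) (hγ : 0 < γ) (hC : 0 ≤ C) (hs₀ : 0 < s₀)
    (E D : ℝ → ℝ) (hE : ∀ s, s₀ ≤ s → DifferentiableAt ℝ E s)
    (hD : ContinuousOn D (Set.Ici s₀)) (hDnn : ∀ s, s₀ ≤ s → 0 ≤ D s)
    (hineq : ∀ s, s₀ ≤ s → deriv E s ≤ -D s + γ * s ^ (-(a + 1)) * E s + C * s ^ (-(a + 1)))
    (θ : ℝ) (hθ : C / a * Real.exp ((γ / a) * s₀ ^ (-a)) ≤ θ) :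
    ∀ s₁ s₂ : ℝ, s₀ ≤ s₁ → s₁ ≤ s₂ →
      (E s₂ * Real.exp ((γ / a) * s₂ ^ (-a)) + θ * s₂ ^ (-a)) -
          (E s₁ * Real.exp ((γ / a) * s₁ ^ (-a)) + θ * s₁ ^ (-a)) ≤
        -∫ s in s₁..s₂, D s := by
  intro s₁ s₂ hs₁ h12
  set g : ℝ → ℝ := fun s =>
    E s * Real.exp ((γ / a) * s ^ (-a)) + θ * s ^ (-a) + ∫ t in s₁..s, D t with hg
  -- the function s ↦ E s * exp(...) + θ s^(-a), i.e. g without the integral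
  have hsub : Set.Icc s₁ s₂ ⊆ Set.Ici s₀ := fun x hx => le_trans hs₁ hx.1
  have hDint : MeasureTheory.IntegrableOn D (Set.uIcc s₁ s₂) MeasureTheory.volume := by
    rw [Set.uIcc_of_le h12]
    exact (hD.mono hsub).integrableOn_Icc
  -- differentiability and derivative bound on the interior
  have key : ∀ s ∈ Set.Ioo s₁ s₂, HasDerivAt g
      (deriv E s * Real.exp ((γ / a) * s ^ (-a))
        + E s * (Real.exp ((γ / a) * s ^ (-a)) * ((γ / a) * (-a * s ^ (-a - 1))))
        + θ * (-a * s ^ (-a - 1)) + D s) s := by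
    intro s hs
    have hss₀ : s₀ ≤ s := le_trans hs₁ hs.1.le
    have hspos : 0 < s := lt_of_lt_of_le hs₀ hss₀
    have h1 : HasDerivAt (fun x : ℝ => x ^ (-a)) (-a * s ^ (-a - 1)) s :=
      Real.hasDerivAt_rpow_const (Or.inl hspos.ne')
    have h2 : HasDerivAt (fun x : ℝ => Real.exp ((γ / a) * x ^ (-a)))
        (Real.exp ((γ / a) * s ^ (-a)) * ((γ / a) * (-a * s ^ (-a - 1)))) s :=
      (h1.const_mul (γ / a)).exp
    have h3 := ((hE s hss₀).hasDerivAt.mul h2).add (h1.const_mul θ)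
    have h4 : HasDerivAt (fun u => ∫ t in s₁..u, D t) (D s) s := by
      have hnhds : Set.Ici s₀ ∈ nhds s :=
        Filter.mem_of_superset (isOpen_Ioi.mem_nhds (lt_of_le_of_lt hs₁ hs.1))
          Set.Ioi_subset_Ici_self
      refine intervalIntegral.integral_hasDerivAt_right ?_ ?_ (hD.continuousAt hnhds)
      · refine (hD.mono ?_).intervalIntegrable
        rw [Set.uIcc_of_le hs.1.le]
        exact fun x hx => le_trans hs₁ hx.1
      · exact ⟨Set.Ioi s₀, isOpen_Ioi.mem_nhds (lt_of_le_of_lt hs₁ hs.1),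
          (hD.mono Set.Ioi_subset_Ici_self).aestronglyMeasurable measurableSet_Ioi⟩
    exact h3.add h4
  have hderiv_le : ∀ s ∈ interior (Set.Icc s₁ s₂), deriv g s ≤ 0 := by
    rw [interior_Icc]
    intro s hs
    rw [(key s hs).deriv]
    have hss₀ : s₀ ≤ s := le_trans hs₁ hs.1.le
    have hspos : 0 < s := lt_of_lt_of_le hs₀ hss₀
    set eφ := Real.exp ((γ / a) * s ^ (-a)) with heφ
    have heφ1 : 1 ≤ eφ := Real.one_le_exp (by positivity)
    have heφ0 : 0 < eφ := Real.exp_pos _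
    have hpow : 0 < s ^ (-a - 1) := Real.rpow_pos_of_pos hspos _
    have hEq : (-(a + 1)) = -a - 1 := by ring
    have hE' := hineq s hss₀
    rw [hEq] at hE'
    have hmul : deriv E s * eφ ≤ (-D s + γ * s ^ (-a - 1) * E s + C * s ^ (-a - 1)) * eφ :=
      mul_le_mul_of_nonneg_right hE' heφ0.le
    -- θ-term bound
    have hmono : s ^ (-a) ≤ s₀ ^ (-a) :=
      Real.rpow_le_rpow_of_nonpos hs₀ hss₀ (neg_nonpos.mpr ha.le)
    have hexp : eφ ≤ Real.exp ((γ / a) * s₀ ^ (-a)) := by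
      apply Real.exp_le_exp.mpr
      exact mul_le_mul_of_nonneg_left hmono (by positivity)
    have hθ' : C / a * eφ ≤ θ :=
      le_trans (mul_le_mul_of_nonneg_left hexp (by positivity)) hθ
    have hθ'' : C * eφ ≤ a * θ := by
      have := mul_le_mul_of_nonneg_left hθ' ha.le
      calc C * eφ = a * (C / a * eφ) := by field_simp
        _ ≤ a * θ := this
    have hterm : C * s ^ (-a - 1) * eφ ≤ a * θ * s ^ (-a - 1) := by
      have := mul_le_mul_of_nonneg_right hθ'' hpow.le
      nlinarith
    have hDterm : D s * (1 - eφ) ≤ 0 :=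
      mul_nonpos_of_nonneg_of_nonpos (hDnn s hss₀) (by linarith)
    have hrw : E s * (eφ * (γ / a * (-a * s ^ (-a - 1))))
        = -(γ * s ^ (-a - 1) * E s * eφ) := by
      field_simp
    rw [hrw]
    have hDrw : D s * (1 - eφ) = D s - D s * eφ := by ring
    rw [hDrw] at hDterm
    nlinarith [hmul, hterm, hDterm]
  have hcont : ContinuousOn g (Set.Icc s₁ s₂) := by
    apply ContinuousOn.add
    · intro x hx
      have hx0 : x ≠ 0 := ne_of_gt (lt_of_lt_of_le hs₀ (hsub hx))
      have hr : ContinuousAt (fun s : ℝ => s ^ (-a)) x :=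
        Real.continuousAt_rpow_const x (-a) (Or.inl hx0)
      exact (((hE x (hsub hx)).continuousAt.mul
        (Real.continuous_exp.continuousAt.comp (hr.const_mul (γ / a)))).add
        (hr.const_mul θ)).continuousWithinAt
    · exact (intervalIntegral.continuousOn_primitive_interval hDint).mono
        (by rw [Set.uIcc_of_le h12])
  have hdiff : DifferentiableOn ℝ g (interior (Set.Icc s₁ s₂)) := by
    rw [interior_Icc]
    exact fun s hs => (key s hs).differentiableAt.differentiableWithinAt
  have hanti : AntitoneOn g (Set.Icc s₁ s₂) :=
    antitoneOn_of_deriv_nonpos (convex_Icc s₁ s₂) hcont hdiff hderiv_le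
  have := hanti (Set.left_mem_Icc.mpr h12) (Set.right_mem_Icc.mpr h12) h12
  simp only [hg, intervalIntegral.integral_same] at this
  linarith
end
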